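/- arXiv:1112.6010 — 10 statements merged into one kernel-verified Lean document; each statement's English description precedes it below -/
import Mathlib

section
/- For k ≥ 2 and ε > 0, let x = x₁(ε) > 1 satisfy log(1 + 1/x)/log x = ε and let x_k > 1 satisfy log(1 + 1/(x_k + x_k² + ⋯ + x_k^k))/log x_k = ε. Then x_k < (k·x)^{1/k}. -/
open Real Filter

noncomputable def G (n : ℕ) : ℝ := (∑ d ∈ n.divisors, (d : ℝ)) / (n * Real.log (Real.log n))

def sigma' (n : ℕ) : ℕ := ∑ d ∈ n.divisors, d

def IsGA1 (N : ℕ) : Prop :=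
  1 < N ∧ ¬ N.Prime ∧ ∀ p : ℕ, p.Prime → p ∣ N → G (N / p) ≤ G N

def IsGA2 (N : ℕ) : Prop :=
  1 < N ∧ ∀ a : ℕ, 0 < a → G (a * N) ≤ G N

def IsCA (N : ℕ) (ε : ℝ) : Prop :=
  0 < N ∧ ∀ n : ℕ, 1 < n → (sigma' n : ℝ) / (n : ℝ) ^ (1 + ε) ≤ (sigma' N : ℝ) / (N : ℝ) ^ (1 + ε)

noncomputable def F (t : ℝ) (k : ℕ) : ℝ :=
  Real.log (1 + 1 / (∑ i ∈ Finset.Icc 1 k, t ^ i)) / Real.log t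

noncomputable def chebTheta (n : ℕ) : ℝ :=
  ∑ p ∈ Finset.filter Nat.Prime (Finset.range (n + 1)), Real.log p

set_option maxHeartbeats 1600000 in
theorem stmt3 (k : ℕ) (hk : 2 ≤ k) (ε : ℝ) (hε : 0 < ε)
    (x xk : ℝ) (hx : 1 < x) (hxk : 1 < xk)
    (hFx : F x 1 = ε) (hFxk : F xk k = ε) :
    xk < (k * x) ^ ((1 : ℝ) / k) := by
  by_contra hcon
  push_neg at hcon
  have hk2 : (2:ℝ) ≤ (k:ℝ) := by exact_mod_cast hk
  have hk0 : (0:ℝ) < (k:ℝ) := by linarith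
  have hx0 : (0:ℝ) < x := by linarith
  have hxk0 : (0:ℝ) < xk := by linarith
  have hkx1 : (1:ℝ) < (k:ℝ) * x := by nlinarith
  have hkx0 : (0:ℝ) < (k:ℝ) * x := by linarith
  -- from hcon : (k*x)^(1/k) ≤ xk, get k*x ≤ xk^k
  have hpow : (k:ℝ) * x ≤ xk ^ k := by
    have h1 : (((k:ℝ) * x) ^ ((1:ℝ)/k)) ^ k ≤ xk ^ k :=
      pow_le_pow_left₀ (Real.rpow_nonneg hkx0.le _) hcon k
    rwa [← Real.rpow_natCast (((k:ℝ) * x) ^ ((1:ℝ)/k)) k, ← Real.rpow_mul hkx0.le,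
      one_div, inv_mul_cancel₀ (by positivity : ((k:ℕ):ℝ) ≠ 0), Real.rpow_one] at h1
  set S : ℝ := ∑ i ∈ Finset.Icc 1 k, xk ^ i with hSdef
  have hSgt : xk ^ k < S := by
    apply Finset.single_lt_sum (i := k) (j := 1)
    · omega
    · simp [Finset.mem_Icc]; omega
    · simp [Finset.mem_Icc]; omega
    · positivity
    · intro i _ _; positivity
  have hxkpow : (0:ℝ) < xk ^ k := by positivity
  have hS0 : (0:ℝ) < S := lt_trans hxkpow hSgt
  have hLxk : 0 < Real.log xk := Real.log_pos hxk
  have hLx : 0 < Real.log x := Real.log_pos hx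
  -- ε * log xk = log (1 + 1/S)
  have hεL : ε * Real.log xk = Real.log (1 + 1/S) := by
    have h := hFxk
    unfold F at h
    rw [← hSdef, div_eq_iff hLxk.ne'] at h
    linarith
  -- ε * log x = log (1 + 1/x)
  have hεLx : ε * Real.log x = Real.log (1 + 1/x) := by
    have h := hFx
    unfold F at h
    simp only [Finset.Icc_self, Finset.sum_singleton, pow_one] at h
    rw [div_eq_iff hLx.ne'] at h
    linarith
  -- log (1 + 1/S) < 1/S
  have hlog1 : Real.log (1 + 1/S) < 1/S := by
    have h1S : (0:ℝ) < 1/S := by positivity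
    have hne : (1:ℝ) + 1/S ≠ 1 := by intro h; rw [add_eq_left] at h; linarith
    have := Real.log_lt_sub_one_of_pos (by positivity : (0:ℝ) < 1 + 1/S) hne
    linarith
  have h2 : ε * Real.log xk < 1 / xk ^ k := by
    have := one_div_lt_one_div_of_lt hxkpow hSgt
    linarith [hεL ▸ hlog1]
  -- ε * log (k*x) ≤ ε * k * log xk < k / xk^k ≤ 1/x
  have h3 : ε * Real.log ((k:ℝ) * x) < 1 / x := by
    have hmono : Real.log ((k:ℝ) * x) ≤ Real.log (xk ^ k) :=
      Real.log_le_log hkx0 hpow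
    have hlogpow : Real.log (xk ^ k) = (k:ℝ) * Real.log xk := by
      rw [Real.log_pow]
    have hA : ε * Real.log ((k:ℝ) * x) ≤ (k:ℝ) * (ε * Real.log xk) := by
      have := mul_le_mul_of_nonneg_left hmono hε.le
      rw [hlogpow] at this; nlinarith
    have hB : (k:ℝ) * (ε * Real.log xk) < (k:ℝ) / xk ^ k := by
      have := mul_lt_mul_of_pos_left h2 hk0
      calc (k:ℝ) * (ε * Real.log xk) < (k:ℝ) * (1 / xk ^ k) := this
        _ = (k:ℝ) / xk ^ k := by ring
    have hC : (k:ℝ) / xk ^ k ≤ 1 / x := by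
      rw [div_le_div_iff₀ hxkpow hx0]
      nlinarith
    linarith
  -- 1/(x+1) < log (1 + 1/x)
  have h4 : 1 / (x + 1) < Real.log (1 + 1/x) := by
    have ht0 : (0:ℝ) < x / (x + 1) := by positivity
    have ht1 : x / (x + 1) ≠ 1 := by
      intro h
      rw [div_eq_one_iff_eq (by linarith : x + 1 ≠ 0)] at h
      linarith
    have := Real.log_lt_sub_one_of_pos ht0 ht1
    have hinv : Real.log (x / (x + 1)) = - Real.log (1 + 1/x) := by
      rw [← Real.log_inv]
      congr 1
      field_simp
    rw [hinv] at this
    have : -(Real.log (1 + 1/x)) < x / (x+1) - 1 := this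
    have he : x / (x+1) - 1 = -(1/(x+1)) := by field_simp; ring
    rw [he] at this
    linarith
  -- combine
  have hlogkx : Real.log ((k:ℝ) * x) = Real.log k + Real.log x :=
    Real.log_mul (by positivity) (by positivity)
  have h5 : ε * Real.log k < 1/x - 1/(x+1) := by
    have : ε * Real.log ((k:ℝ)*x) = ε * Real.log k + ε * Real.log x := by
      rw [hlogkx]; ring
    nlinarith [h4, hεLx]
  have h6 : 1/x - 1/(x+1) = 1/(x*(x+1)) := by
    field_simp
    ring
  have hεlb : 1/(x+1) < ε * Real.log x := by rw [hεLx]; exact h4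
  have hlogk0 : (0:ℝ) < Real.log k := Real.log_pos (by linarith)
  -- derive x * log k < log x
  have h7 : x * Real.log k < Real.log x := by
    -- ε > 1/((x+1) log x)
    have hεgt : 1/((x+1) * Real.log x) < ε := by
      rw [div_lt_iff₀ (by positivity)]
      have h' := mul_lt_mul_of_pos_right hεlb (show (0:ℝ) < x+1 by linarith)
      rw [one_div, inv_mul_cancel₀ (show x+1 ≠ 0 by positivity)] at h'
      nlinarith [h']
    have := mul_lt_mul_of_pos_right hεgt hlogk0
    rw [h6] at h5
    have hkey : 1/((x+1) * Real.log x) * Real.log k < 1/(x*(x+1)) := lt_trans this h5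
    rw [div_mul_eq_mul_div, one_mul, div_lt_div_iff₀ (by positivity) (by positivity)] at hkey
    nlinarith
  -- log x ≤ x / e
  have h8 : Real.log x ≤ x / Real.exp 1 := by
    have h := Real.log_le_sub_one_of_pos (show (0:ℝ) < x / Real.exp 1 by positivity)
    have : Real.log (x / Real.exp 1) = Real.log x - 1 := by
      rw [Real.log_div hx0.ne' (Real.exp_ne_zero 1), Real.log_exp]
    linarith [this ▸ h]
  -- so log k < 1/e < log 2 ≤ log k, contradiction
  have h9 : Real.log k < 1 / Real.exp 1 := by
    have : x * Real.log k < x * (1/Real.exp 1) := by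
      rw [mul_one_div]; linarith
    exact lt_of_mul_lt_mul_left this hx0.le
  have he2 : (2:ℝ) < Real.exp 1 := by
    have := Real.exp_one_gt_d9; linarith
  have h10 : 1 / Real.exp 1 < 1/2 := by
    apply one_div_lt_one_div_of_lt <;> linarith
  have h11 : (1:ℝ)/2 < Real.log 2 := by
    have := Real.log_two_gt_d9; linarith
  have h12 : Real.log 2 ≤ Real.log k := Real.log_le_log (by norm_num) hk2
  linarith
end

section
/- Let N₀ be a colossally abundant number of parameter ε₀ > 0, and let N > N₀ be an integer such that for some ε > 0 and all n ≥ N₀ we have σ(n)/n^{1+ε} ≤ σ(N)/N^{1+ε}. Then N is colossally abundant of parameter ε, i.e., σ(n)/n^{1+ε} ≤ σ(N)/N^{1+ε} holds for all integers n > 1. -/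
open Real Filter

lemma sigma'_pos {n : ℕ} (hn : 0 < n) : 0 < sigma' n := by
  have hmem : n ∈ n.divisors := Nat.mem_divisors_self n hn.ne'
  have := Finset.single_le_sum (f := fun d : ℕ => d) (fun i _ => Nat.zero_le i) hmem
  exact lt_of_lt_of_le hn this

lemma aux_mono (a b : ℕ) (e e' : ℝ) (ha : 0 < a) (hab : a ≤ b) (hee : e ≤ e')
    (hle : (sigma' a : ℝ) / (a : ℝ) ^ (1 + e') ≤ (sigma' b : ℝ) / (b : ℝ) ^ (1 + e')) :
    (sigma' a : ℝ) / (a : ℝ) ^ (1 + e) ≤ (sigma' b : ℝ) / (b : ℝ) ^ (1 + e) := by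
  have ha' : (0:ℝ) < a := by exact_mod_cast ha
  have hb' : (0:ℝ) < b := lt_of_lt_of_le ha' (by exact_mod_cast hab)
  have h1 : (sigma' a : ℝ) / (a : ℝ) ^ (1 + e)
      = ((sigma' a : ℝ) / (a : ℝ) ^ (1 + e')) * (a : ℝ) ^ (e' - e) := by
    rw [show (1 + e') = (1 + e) + (e' - e) by ring, Real.rpow_add ha']
    field_simp
    rw [Real.rpow_add ha',
      Real.rpow_add ha', Real.rpow_one]
    ring
  have h2 : (sigma' b : ℝ) / (b : ℝ) ^ (1 + e)
      = ((sigma' b : ℝ) / (b : ℝ) ^ (1 + e')) * (b : ℝ) ^ (e' - e) := by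
    rw [show (1 + e') = (1 + e) + (e' - e) by ring, Real.rpow_add hb']
    field_simp
    rw [Real.rpow_add hb',
      Real.rpow_add hb', Real.rpow_one]
    ring
  rw [h1, h2]
  have hpow : (a : ℝ) ^ (e' - e) ≤ (b : ℝ) ^ (e' - e) :=
    Real.rpow_le_rpow ha'.le (by exact_mod_cast hab) (by linarith)
  have hb0 : (0:ℝ) ≤ (sigma' b : ℝ) / (b : ℝ) ^ (1 + e') := by positivity
  exact mul_le_mul hle hpow (by positivity) hb0

theorem stmt4 (N₀ N : ℕ) (ε₀ ε : ℝ) (hε₀ : 0 < ε₀) (hε : 0 < ε)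
    (hCA₀ : IsCA N₀ ε₀) (hNN₀ : N₀ < N)
    (h : ∀ n : ℕ, N₀ ≤ n →
      (sigma' n : ℝ) / (n : ℝ) ^ (1 + ε) ≤ (sigma' N : ℝ) / (N : ℝ) ^ (1 + ε)) :
    IsCA N ε := by
  obtain ⟨hN₀pos, hCA⟩ := hCA₀
  have hNpos : 0 < N := lt_trans hN₀pos hNN₀
  have hN1 : 1 < N := lt_of_le_of_lt hN₀pos hNN₀
  have hN₀' : (0:ℝ) < N₀ := by exact_mod_cast hN₀pos
  have hN' : (0:ℝ) < N := by exact_mod_cast hNpos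
  have hNN' : (N₀ : ℝ) < N := by exact_mod_cast hNN₀
  have hA : (0:ℝ) < (sigma' N₀ : ℝ) := by exact_mod_cast sigma'_pos hN₀pos
  have hB : (0:ℝ) < (sigma' N : ℝ) := by exact_mod_cast sigma'_pos hNpos
  have hεε₀ : ε ≤ ε₀ := by
    by_contra hc
    push_neg at hc
    have h1 := h N₀ le_rfl
    have h2 := hCA N hN1
    rw [div_le_div_iff₀ (by positivity) (by positivity)] at h1 h2
    have e1 : (N : ℝ) ^ (1 + ε) = (N : ℝ) ^ (1 + ε₀) * (N : ℝ) ^ (ε - ε₀) := by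
      rw [← Real.rpow_add hN']; ring_nf
    have e2 : (N₀ : ℝ) ^ (1 + ε) = (N₀ : ℝ) ^ (1 + ε₀) * (N₀ : ℝ) ^ (ε - ε₀) := by
      rw [← Real.rpow_add hN₀']; ring_nf
    rw [e1, e2] at h1
    have hx : (N₀ : ℝ) ^ (ε - ε₀) < (N : ℝ) ^ (ε - ε₀) :=
      Real.rpow_lt_rpow hN₀'.le hNN' (by linarith)
    have hv : (0:ℝ) < (N : ℝ) ^ (1 + ε₀) := by positivity
    have hu : (0:ℝ) < (N₀ : ℝ) ^ (1 + ε₀) := by positivity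
    have hy : (0:ℝ) < (N₀ : ℝ) ^ (ε - ε₀) := by positivity
    nlinarith [mul_pos hB hu, mul_pos hA hv]
  refine ⟨hNpos, fun n hn => ?_⟩
  rcases le_or_gt (N₀ : ℕ) n with hge | hlt
  · exact h n hge
  · have hstep : (sigma' n : ℝ) / (n : ℝ) ^ (1 + ε) ≤ (sigma' N₀ : ℝ) / (N₀ : ℝ) ^ (1 + ε) :=
      aux_mono n N₀ ε ε₀ (by omega) hlt.le hεε₀ (hCA n hn)
    exact hstep.trans (h N₀ le_rfl)
end

section
/- Let ε > 0 and define F(t,k) = log(1+1/(t+⋯+t^k))/log t for t>1. Define x_k(ε) by F(x_k,k)=ε, x = x₁, and let K be the largest integer with x_K ≥ 2 (assume ε < log(3/2)/log 2 so K ≥ 1). Then K < 1 + (2/log 2)·log x. -/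
open Real Filter

theorem stmt6 (ε : ℝ) (hε : 0 < ε) (hε' : ε < Real.log (3 / 2) / Real.log 2)
    (x : ℝ) (hx : 1 < x) (hFx : F x 1 = ε)
    (K : ℕ) (hK : 1 ≤ K) (xK : ℝ) (hxK : 2 ≤ xK) (hFxK : F xK K = ε) :
    (K : ℝ) < 1 + (2 / Real.log 2) * Real.log x := by

  have hl2 : (0:ℝ) < Real.log 2 := Real.log_pos (by norm_num)
  have hx0 : (0:ℝ) < x := by linarith
  have hlx : 0 < Real.log x := Real.log_pos hx
  have hFx' : Real.log (1 + 1/x) / Real.log x = ε := by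
    simpa [F, Finset.Icc_self, Finset.sum_singleton, pow_one] using hFx
  -- Step A: x > 2
  have hx2 : 2 < x := by
    by_contra h
    push_neg at h
    have h1 : Real.log (3/2) ≤ Real.log (1 + 1/x) := by
      have : (1:ℝ)/2 ≤ 1/x := one_div_le_one_div_of_le hx0 h
      have h32 : (3:ℝ)/2 ≤ 1 + 1/x := by linarith
      exact Real.log_le_log (by norm_num) h32
    have h2 : Real.log x ≤ Real.log 2 := Real.log_le_log hx0 h
    have h32pos : (0:ℝ) ≤ Real.log (1 + 1/x) := by
      have : (0:ℝ) < Real.log (3/2) := Real.log_pos (by norm_num)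
      linarith
    have hdd : Real.log (3/2)/Real.log 2 ≤ Real.log (1+1/x)/Real.log x :=
      div_le_div₀ h32pos h1 hlx h2
    rw [hFx'] at hdd
    linarith
  -- Step B : ε * log 2 ≤ 1 / 2^K
  have hlxK : 0 < Real.log xK := Real.log_pos (by linarith)
  set S := ∑ i ∈ Finset.Icc 1 K, xK ^ i with hSdef
  have hS : (2:ℝ)^K ≤ S := by
    calc (2:ℝ)^K ≤ xK^K := pow_le_pow_left₀ (by norm_num) hxK K
    _ ≤ S := Finset.single_le_sum (f := fun i => xK^i)
        (fun i _ => by positivity) (Finset.mem_Icc.mpr ⟨hK, le_refl K⟩)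
  have hS0 : (0:ℝ) < S := lt_of_lt_of_le (by positivity) hS
  have hFxK' : Real.log (1 + 1/S) = ε * Real.log xK := by
    have h : Real.log (1 + 1/S) / Real.log xK = ε := hFxK
    rwa [div_eq_iff hlxK.ne'] at h
  have hlog_le : Real.log (1 + 1/S) ≤ 1/S := by
    have := Real.log_le_sub_one_of_pos (show (0:ℝ) < 1 + 1/S by positivity)
    linarith
  have hεlog2 : ε * Real.log 2 ≤ 1/(2:ℝ)^K := by
    have h1 : ε * Real.log 2 ≤ ε * Real.log xK := by
      have := Real.log_le_log (by norm_num : (0:ℝ) < 2) hxK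
      nlinarith
    have h2 : (1:ℝ)/S ≤ 1/(2:ℝ)^K := one_div_le_one_div_of_le (by positivity) hS
    linarith
  -- Step C : 1/(2x) < ε * log x
  have hεx : 1/(2*x) < ε * Real.log x := by
    have hpos : (0:ℝ) < 1 + 1/x := by positivity
    have h1 : Real.log ((1 + 1/x)⁻¹) ≤ (1 + 1/x)⁻¹ - 1 :=
      Real.log_le_sub_one_of_pos (by positivity)
    rw [Real.log_inv] at h1
    have hinv : (1 + 1/x)⁻¹ = x/(x+1) := by
      rw [inv_eq_one_div]; field_simp
    rw [hinv] at h1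
    have h2 : 1 - x/(x+1) = 1/(x+1) := by field_simp; ring
    have h3 : (1:ℝ)/(2*x) < 1/(x+1) := by
      rw [div_lt_div_iff₀ (by linarith) (by linarith)]; linarith
    have h4 : Real.log (1 + 1/x) = ε * Real.log x := by
      rw [div_eq_iff hlx.ne'] at hFx'; exact hFx' 
    linarith
  -- log x < x * log 2
  have hlogx : Real.log x < x * Real.log 2 := by
    have hhalf : (1:ℝ)/2 < Real.log 2 := by
      have := Real.log_two_gt_d9; linarith
    have hxhalf : Real.log (x/2) ≤ x/2 - 1 := by
      have := Real.log_le_sub_one_of_pos (show (0:ℝ) < x/2 by linarith)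
      linarith
    have heq : Real.log x = Real.log (x/2) + Real.log 2 := by
      rw [← Real.log_mul (by linarith) (by norm_num)]
      ring_nf
    nlinarith [mul_pos (show (0:ℝ) < x - 2 by linarith)
      (show (0:ℝ) < Real.log 2 - 1/2 by linarith)]
  -- Step D : combine
  have h2K0 : (0:ℝ) < (2:ℝ)^K := by positivity
  have hmul : (ε * Real.log 2) * (2:ℝ)^K ≤ 1 := (le_div_iff₀ h2K0).mp hεlog2
  have hεl2 : (0:ℝ) < ε * Real.log 2 := by positivity
  have hbig : (1:ℝ) < (ε * Real.log 2) * (2*x^2) := by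
    have h5 : (1:ℝ) < ε * Real.log x * (2*x) := by
      have := (div_lt_iff₀ (show (0:ℝ) < 2*x by linarith)).mp hεx
      linarith
    nlinarith [mul_lt_mul_of_pos_left hlogx (mul_pos hε (show (0:ℝ) < 2*x by linarith))]
  have h2Kx : (2:ℝ)^K < 2*x^2 := by
    have := hmul.trans_lt hbig
    exact lt_of_mul_lt_mul_left this (le_of_lt hεl2)
  have hKlog : (K:ℝ) * Real.log 2 < Real.log 2 + 2 * Real.log x := by
    have := Real.log_lt_log h2K0 h2Kx
    rw [Real.log_pow] at this
    rw [Real.log_mul (by norm_num) (by positivity), Real.log_pow] at this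
    push_cast at this ⊢
    linarith
  rw [show (1:ℝ) + 2/Real.log 2 * Real.log x
      = (Real.log 2 + 2*Real.log x)/Real.log 2 by field_simp,
    lt_div_iff₀ hl2]
  linarith
end

section
/- Let N be a colossally abundant number of parameter ε > 0 with largest prime factor p = P(N) ≥ 5. If ε > 1/(log(N/p)·log log(N/p)), then N is a GA1 number, i.e., G(N) ≥ G(N/q) for every prime factor q of N. -/
open Real Filter

lemma G_def' (n : ℕ) : G n = (sigma' n : ℝ) / (n * Real.log (Real.log n)) := by
  simp [G, sigma']

lemma log_gt_one_of_three_le {x : ℝ} (hx : 3 ≤ x) : 1 < Real.log x := by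
  have he : Real.exp 1 < 3 := by
    have := Real.exp_one_lt_d9; norm_num at this ⊢; linarith
  rw [show (1:ℝ) = Real.log (Real.exp 1) by simp]
  exact Real.log_lt_log (Real.exp_pos 1) (lt_of_lt_of_le he hx)

lemma key_ll {x q ε : ℝ} (hx : 3 ≤ x) (hq : 2 ≤ q)
    (h1 : 1 ≤ ε * (Real.log x * Real.log (Real.log x))) :
    Real.log (Real.log (x*q)) ≤ q^ε * Real.log (Real.log x) := by
  have hLx : 1 < Real.log x := log_gt_one_of_three_le hx
  have hLLx : 0 < Real.log (Real.log x) := Real.log_pos hLx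
  have hlq : 0 < Real.log q := Real.log_pos (by linarith)
  have hxpos : (0:ℝ) < x := by linarith
  have hqpos : (0:ℝ) < q := by linarith
  have hlogmul : Real.log (x*q) = Real.log x + Real.log q :=
    Real.log_mul hxpos.ne' hqpos.ne'
  have hLxpos : 0 < Real.log x := by linarith
  have hstep : Real.log (Real.log (x*q)) ≤ Real.log (Real.log x) + Real.log q / Real.log x := by
    rw [hlogmul]
    have hsplit : Real.log x + Real.log q = Real.log x * (1 + Real.log q / Real.log x) := by
      field_simp
    rw [hsplit, Real.log_mul hLxpos.ne' (by positivity)]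
    have h2 : Real.log (1 + Real.log q / Real.log x) ≤ Real.log q / Real.log x := by
      have := Real.log_le_sub_one_of_pos (x := 1 + Real.log q / Real.log x) (by positivity)
      linarith
    linarith
  have hqe : 1 + ε * Real.log q ≤ q ^ ε := by
    rw [Real.rpow_def_of_pos hqpos]
    have := Real.add_one_le_exp (ε * Real.log q)
    rw [mul_comm (Real.log q) ε]
    linarith
  have hkey : Real.log q / Real.log x ≤ ε * Real.log q * Real.log (Real.log x) := by
    rw [div_le_iff₀ hLxpos]
    nlinarith
  calc Real.log (Real.log (x*q)) ≤ Real.log (Real.log x) + Real.log q / Real.log x := hstep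
    _ ≤ (1 + ε * Real.log q) * Real.log (Real.log x) := by nlinarith
    _ ≤ q^ε * Real.log (Real.log x) := by nlinarith

lemma mono_llinv {a b : ℝ} (ha : 3 ≤ a) (hab : a ≤ b) :
    1/(Real.log b * Real.log (Real.log b)) ≤ 1/(Real.log a * Real.log (Real.log a)) := by
  have h1a : 1 < Real.log a := log_gt_one_of_three_le ha
  have h1b : 1 < Real.log b := log_gt_one_of_three_le (by linarith)
  have hab' : Real.log a ≤ Real.log b := Real.log_le_log (by linarith) hab
  have hab'' : Real.log (Real.log a) ≤ Real.log (Real.log b) :=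
    Real.log_le_log (by linarith) hab'
  have hLLa : 0 < Real.log (Real.log a) := Real.log_pos h1a
  apply one_div_le_one_div_of_le (by positivity)
  nlinarith

lemma no_two_p (p : ℕ) (hp : p.Prime) (hp5 : 5 ≤ p) (ε : ℝ) (hε : 0 < ε)
    (h : (sigma' 6 : ℝ) / ((6:ℕ):ℝ)^(1+ε) ≤ (sigma' (2*p) : ℝ) / ((2*p:ℕ) : ℝ)^(1+ε)) :
    False := by
  have hs6 : sigma' 6 = 12 := by decide
  have hcop : Nat.Coprime 2 p := (Nat.coprime_primes Nat.prime_two hp).mpr (by omega)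
  have hsp : sigma' p = 1 + p := by
    rw [sigma', hp.divisors, Finset.sum_pair (by exact hp.one_lt.ne)]
  have hs2p : sigma' (2*p) = 3 * (1+p) := by
    have hmul : sigma' (2*p) = sigma' 2 * sigma' p := by
      simp only [sigma', ← ArithmeticFunction.sigma_one_apply]
      exact ArithmeticFunction.isMultiplicative_sigma.map_mul_of_coprime hcop
    rw [hmul, hsp, show sigma' 2 = 3 by decide]
  rw [hs6, hs2p] at h
  set P : ℝ := (p : ℝ) with hP
  have hP5 : (5:ℝ) ≤ P := by rw [hP]; exact_mod_cast hp5
  have hcast : ((2*p : ℕ) : ℝ) = 2 * P := by push_cast; ring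
  have hcast6 : ((6:ℕ) : ℝ) = (6:ℝ) := by norm_num
  rw [hcast, hcast6] at h
  have h6pos : (0:ℝ) < (6:ℝ)^(1+ε) := by positivity
  have h2Ppos : (0:ℝ) < (2*P)^(1+ε) := by positivity
  rw [div_le_div_iff₀ h6pos h2Ppos] at h
  have hfact : (2*P)^(1+ε) = (6:ℝ)^(1+ε) * (P/3)^(1+ε) := by
    rw [← Real.mul_rpow (by norm_num) (by positivity)]
    ring_nf
  have hP3 : (P/3:ℝ)^(1:ℝ) ≤ (P/3)^(1+ε) :=
    Real.rpow_le_rpow_of_exponent_le (by linarith) (by linarith)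
  rw [Real.rpow_one] at hP3
  push_cast at h
  rw [hfact] at h
  nlinarith

set_option maxHeartbeats 800000 in
theorem stmt8 (N : ℕ) (ε : ℝ) (hε : 0 < ε) (hCA : IsCA N ε)
    (p : ℕ) (hp : p.Prime) (hpN : p ∣ N)
    (hmax : ∀ q : ℕ, q.Prime → q ∣ N → q ≤ p) (hp5 : 5 ≤ p)
    (hεbig : 1 / (Real.log (N / p) * Real.log (Real.log (N / p))) < ε) :
    ∀ q : ℕ, q.Prime → q ∣ N → G (N / q) ≤ G N := by
  intro q hq hqN
  obtain ⟨hNpos, hCA2⟩ := hCA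
  by_cases hNp : N = p
  · -- N is prime: the only prime factor is p and N/p = 1
    have hqp : q = p := (Nat.prime_dvd_prime_iff_eq hq hp).mp (hNp ▸ hqN)
    rw [hqp, hNp, Nat.div_self hp.pos]
    have h1 : G 1 = 0 := by simp [G]
    rw [h1, G_def']
    apply div_nonneg (by positivity)
    have hp3 : (3:ℝ) ≤ (p:ℕ) := by exact_mod_cast (by omega : 3 ≤ p)
    have := log_gt_one_of_three_le hp3
    have := Real.log_pos this
    positivity
  · -- main case
    have hq2 : 2 ≤ q := hq.two_le
    have hqple : q ≤ p := hmax q hq hqN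
    have hNe : N = p * (N/p) := (Nat.mul_div_cancel' hpN).symm
    have hm : 3 ≤ N / p := by
      by_contra hcon
      push_neg at hcon
      interval_cases h : (N / p)
      · omega
      · omega
      · exact no_two_p p hp hp5 ε hε (by
          have h2p : N = 2 * p := by omega
          rw [← h2p]
          exact hCA2 6 (by norm_num))
    have h3pN : 3 * p ≤ N := by
      calc 3 * p ≤ (N/p) * p := by
            apply Nat.mul_le_mul_right _ hm
      _ = N := Nat.div_mul_cancel hpN
    have hNq3 : 3 ≤ N / q := by
      rw [Nat.le_div_iff_mul_le (by omega : 0 < q)]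
      calc 3 * q ≤ 3 * p := by omega
        _ ≤ N := h3pN
    -- real setup
    set n' := N / q with hn'
    have hn'dvd : q * n' = N := Nat.mul_div_cancel' hqN
    set x : ℝ := (n' : ℝ) with hxdef
    set Q : ℝ := (q : ℝ) with hQdef
    have hNR : (N:ℝ) = x * Q := by
      rw [hxdef, hQdef, ← hn'dvd]; push_cast; ring
    have hx3 : (3:ℝ) ≤ x := by rw [hxdef]; exact_mod_cast hNq3
    have hQ2 : (2:ℝ) ≤ Q := by rw [hQdef]; exact_mod_cast hq2
    have hNp3R : (3:ℝ) ≤ ((N/p : ℕ):ℝ) := by exact_mod_cast hm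
    have hdivle : ((N/p : ℕ):ℝ) ≤ x := by
      rw [hxdef]
      exact_mod_cast Nat.div_le_div_left hqple (by omega : 0 < q)
    have hcastdiv : ((N:ℝ)/(p:ℝ)) = ((N/p : ℕ) : ℝ) :=
      (Nat.cast_div hpN (Nat.cast_ne_zero (R := ℝ)|>.mpr hp.pos.ne')).symm
    rw [hcastdiv] at hεbig
    have hεx : 1 ≤ ε * (Real.log x * Real.log (Real.log x)) := by
      have hmono := mono_llinv hNp3R hdivle
      have hlt : 1 / (Real.log x * Real.log (Real.log x)) < ε := lt_of_le_of_lt hmono hεbig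
      have h1x : 1 < Real.log x := log_gt_one_of_three_le hx3
      have hpos : 0 < Real.log x * Real.log (Real.log x) := by
        have := Real.log_pos h1x; nlinarith
      rw [div_lt_iff₀ hpos] at hlt
      nlinarith
    have hkey : Real.log (Real.log (x*Q)) ≤ Q^ε * Real.log (Real.log x) :=
      key_ll hx3 hQ2 hεx
    -- CA inequality
    have hca := hCA2 n' (by omega : 1 < n')
    rw [G_def', G_def']
    set S : ℝ := (sigma' N : ℝ) with hS
    set S' : ℝ := (sigma' n' : ℝ) with hS'
    have hSnn : 0 ≤ S := by rw [hS]; positivity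
    have hS'nn : 0 ≤ S' := by rw [hS']; positivity
    have hxpos : (0:ℝ) < x := by linarith
    have hQpos : (0:ℝ) < Q := by linarith
    have hxpow : (0:ℝ) < x^(1+ε) := by positivity
    have hQpow : (0:ℝ) < Q^(1+ε) := by positivity
    have hNpow : ((N:ℝ))^(1+ε) = x^(1+ε) * Q^(1+ε) := by
      rw [hNR, Real.mul_rpow (le_of_lt hxpos) (le_of_lt hQpos)]
    have hS'le : S' ≤ S / Q^(1+ε) := by
      have hca' : S' / x^(1+ε) ≤ S / ((N:ℝ))^(1+ε) := hca
      rw [hNpow, div_le_div_iff₀ hxpow (by positivity)] at hca'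
      rw [le_div_iff₀ hQpow]
      have : (S' * Q^(1+ε)) * x^(1+ε) ≤ S * x^(1+ε) := by nlinarith
      exact le_of_mul_le_mul_right this hxpow
    have hLLx : 0 < Real.log (Real.log x) :=
      Real.log_pos (log_gt_one_of_three_le hx3)
    have hLLN : 0 < Real.log (Real.log (N:ℝ)) := by
      apply Real.log_pos
      apply log_gt_one_of_three_le
      have : (15:ℝ) ≤ (N:ℝ) := by exact_mod_cast (by omega : 15 ≤ N)
      linarith
    have hNRpos : (0:ℝ) < (N:ℝ) := by exact_mod_cast hNpos
    have hQε : (0:ℝ) < Q^ε := by positivity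
    calc S' / (x * Real.log (Real.log x))
        ≤ (S / Q^(1+ε)) / (x * Real.log (Real.log x)) := by
          apply div_le_div_of_nonneg_right hS'le (le_of_lt (mul_pos hxpos hLLx))
      _ = S / (((N:ℝ) * Q^ε) * Real.log (Real.log x)) := by
          have harr : Q^((1:ℝ)+ε) * (x * Real.log (Real.log x))
              = ((N:ℝ) * Q^ε) * Real.log (Real.log x) := by
            rw [Real.rpow_add hQpos, Real.rpow_one, hNR]; ring
          rw [div_div, harr]
      _ ≤ S / ((N:ℝ) * Real.log (Real.log (N:ℝ))) := by
          apply div_le_div_of_nonneg_left hSnn (mul_pos hNRpos hLLN)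
          have hll : Real.log (Real.log (N:ℝ)) ≤ Q^ε * Real.log (Real.log x) := by
            rw [hNR]; exact hkey
          nlinarith
end

section
/- Let N be a GA1 number with Ω(N) ≥ 3 and let p be a prime factor of N. Then for any positive integer r ≤ v_p(N), we have p ≤ (r·log N)^{1/r} ≤ log N. -/
open Real Filter

lemma two_pow_len_le_prod : ∀ l : List ℕ, (∀ x ∈ l, 2 ≤ x) → 2 ^ l.length ≤ l.prod := by
  intro l
  induction l with
  | nil => simp
  | cons a t ih =>
    intro h
    simp only [List.length_cons, List.prod_cons, pow_succ, mul_comm]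
    exact Nat.mul_le_mul (h a (by simp)) (ih fun x hx => h x (by simp [hx]))

lemma two_pow_cardFactors_le {n : ℕ} (hn : n ≠ 0) :
    2 ^ (ArithmeticFunction.cardFactors n) ≤ n := by
  rw [ArithmeticFunction.cardFactors_apply]
  calc 2 ^ n.primeFactorsList.length ≤ n.primeFactorsList.prod :=
        two_pow_len_le_prod _ fun x hx => (Nat.prime_of_mem_primeFactorsList hx).two_le
    _ = n := Nat.prod_primeFactorsList hn

lemma le_two_pow_pred : ∀ r : ℕ, r ≤ 2 ^ (r - 1) := by
  intro r
  induction r with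
  | zero => simp
  | succ n ih =>
    rcases Nat.eq_zero_or_pos n with h | h
    · simp [h]
    · have hn : n + 1 - 1 = (n - 1) + 1 := by omega
      rw [hn, pow_succ]
      omega

theorem stmt10 (N : ℕ) (hGA1 : IsGA1 N) (hΩ : 3 ≤ (ArithmeticFunction.cardFactors N))
    (p : ℕ) (hp : p.Prime) (hpN : p ∣ N)
    (r : ℕ) (hr : 1 ≤ r) (hrv : r ≤ N.factorization p) :
    (p : ℝ) ≤ (r * Real.log N) ^ ((1 : ℝ) / r) ∧
      (r * Real.log N) ^ ((1 : ℝ) / r) ≤ Real.log N := by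
  obtain ⟨hN1, -, hGA⟩ := hGA1
  have hN0 : N ≠ 0 := by omega
  set a := N.factorization p with ha_def
  have ha : 1 ≤ a := le_trans hr hrv
  set m := N / p ^ a with hm_def
  have hpm : ¬ p ∣ m := Nat.not_dvd_ordCompl hp hN0
  have hNeq : p ^ a * m = N := Nat.ordProj_mul_ordCompl_eq_self N p
  have hm0 : m ≠ 0 := by intro h; rw [h, mul_zero] at hNeq; omega
  set M := N / p with hM_def
  have hMN : p * M = N := Nat.mul_div_cancel' hpN
  have hM0 : M ≠ 0 := by intro h; rw [h, mul_zero] at hMN; omega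
  have hMeq : M = p ^ (a - 1) * m := by
    have haa : a = (a - 1) + 1 := by omega
    refine Nat.eq_of_mul_eq_mul_left hp.pos ?_
    rw [hMN, ← hNeq, ← mul_assoc, ← pow_succ', ← haa]
  -- cardFactors computations
  have hΩM : 2 ≤ ArithmeticFunction.cardFactors M := by
    have hmul := ArithmeticFunction.cardFactors_mul (m := p) (n := M) hp.pos.ne' hM0
    rw [hMN, ArithmeticFunction.cardFactors_apply_prime hp] at hmul
    omega
  have h8 : 8 ≤ N := by
    calc (8 : ℕ) = 2 ^ 3 := by norm_num
      _ ≤ 2 ^ (ArithmeticFunction.cardFactors N) := Nat.pow_le_pow_right (by norm_num) hΩ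
      _ ≤ N := two_pow_cardFactors_le hN0
  have h4 : 4 ≤ M := by
    calc (4 : ℕ) = 2 ^ 2 := by norm_num
      _ ≤ 2 ^ (ArithmeticFunction.cardFactors M) := Nat.pow_le_pow_right (by norm_num) hΩM
      _ ≤ M := two_pow_cardFactors_le hM0
  -- real logarithm estimates
  have hexp1 : Real.exp 1 < 2.7182818286 := Real.exp_one_lt_d9
  have hL2 : 2 < Real.log N := by
    have h8' : (8 : ℝ) ≤ N := by exact_mod_cast h8
    have he2 : Real.exp 2 < 8 := by
      have : Real.exp 2 = Real.exp 1 * Real.exp 1 := by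
        rw [← Real.exp_add]; norm_num
      nlinarith [Real.exp_pos 1]
    calc (2 : ℝ) < Real.log 8 := (Real.lt_log_iff_exp_lt (by norm_num)).2 he2
      _ ≤ Real.log N := Real.log_le_log (by norm_num) h8'
  have hL0 : 0 < Real.log N := by linarith
  have hLM1 : 1 < Real.log M := by
    have h4' : (4 : ℝ) ≤ M := by exact_mod_cast h4
    have he1 : Real.exp 1 < 4 := by nlinarith
    calc (1 : ℝ) < Real.log 4 := (Real.lt_log_iff_exp_lt (by norm_num)).2 he1
      _ ≤ Real.log M := Real.log_le_log (by norm_num) h4'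
  have hLM0 : 0 < Real.log M := by linarith
  have hLLM : 0 < Real.log (Real.log M) := Real.log_pos hLM1
  have hLLN : 0 < Real.log (Real.log N) := Real.log_pos (by linarith)
  have hp1 : (1 : ℝ) < p := by exact_mod_cast hp.one_lt
  have hLp : 0 < Real.log p := Real.log_pos hp1
  have hLsplit : Real.log N = Real.log p + Real.log M := by
    rw [← hMN]
    push_cast
    exact Real.log_mul (by positivity) (by exact_mod_cast hM0)
  -- sigma computations
  have hsig : ∀ k : ℕ, (∑ d ∈ (p ^ k).divisors, (d : ℝ)) = ∑ i ∈ Finset.range (k + 1), (p : ℝ) ^ i := by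
    intro k
    have hnat : (∑ d ∈ (p ^ k).divisors, d) = ∑ i ∈ Finset.range (k + 1), p ^ i := by
      rw [← ArithmeticFunction.sigma_one_apply, ArithmeticFunction.sigma_one_apply_prime_pow hp]
    calc (∑ d ∈ (p ^ k).divisors, (d : ℝ))
        = ((∑ d ∈ (p ^ k).divisors, d : ℕ) : ℝ) := by rw [Nat.cast_sum]
      _ = ((∑ i ∈ Finset.range (k + 1), p ^ i : ℕ) : ℝ) := by rw [hnat]
      _ = ∑ i ∈ Finset.range (k + 1), (p : ℝ) ^ i := by push_cast; rfl
  have hmul : ∀ x y : ℕ, Nat.Coprime x y →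
      (∑ d ∈ (x * y).divisors, (d : ℝ)) = (∑ d ∈ x.divisors, (d : ℝ)) * (∑ d ∈ y.divisors, (d : ℝ)) := by
    intro x y h
    have hnat := (ArithmeticFunction.isMultiplicative_sigma (k := 1)).map_mul_of_coprime h
    rw [ArithmeticFunction.sigma_one_apply, ArithmeticFunction.sigma_one_apply,
      ArithmeticFunction.sigma_one_apply] at hnat
    calc (∑ d ∈ (x * y).divisors, (d : ℝ))
        = ((∑ d ∈ (x * y).divisors, d : ℕ) : ℝ) := by rw [Nat.cast_sum]
      _ = (((∑ d ∈ x.divisors, d) * ∑ d ∈ y.divisors, d : ℕ) : ℝ) := by rw [hnat]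
      _ = (∑ d ∈ x.divisors, (d : ℝ)) * (∑ d ∈ y.divisors, (d : ℝ)) := by
          push_cast; rfl
  set σm : ℝ := ∑ d ∈ m.divisors, (d : ℝ) with hσm_def
  set T : ℝ := ∑ i ∈ Finset.range a, (p : ℝ) ^ i with hT_def
  have hcop : ∀ k : ℕ, Nat.Coprime (p ^ k) m :=
    fun k => Nat.Coprime.pow_left _ ((Nat.Prime.coprime_iff_not_dvd hp).2 hpm)
  have hσM : (∑ d ∈ M.divisors, (d : ℝ)) = T * σm := by
    have haa : a - 1 + 1 = a := by omega
    rw [hMeq, hmul _ _ (hcop (a - 1)), hsig (a - 1), haa]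
  have hgeo : (∑ i ∈ Finset.range (a + 1), (p : ℝ) ^ i) = 1 + p * T := by
    rw [hT_def, Finset.mul_sum, Finset.sum_range_succ']
    simp only [pow_succ', pow_zero]
    ring
  have hσN : (∑ d ∈ N.divisors, (d : ℝ)) = (1 + p * T) * σm := by
    rw [← hNeq, hmul _ _ (hcop a), hsig a, hgeo, hσm_def]
  have hσm_pos : 0 < σm := by
    refine Finset.sum_pos (fun d hd => by exact_mod_cast Nat.pos_of_mem_divisors hd) ?_
    exact ⟨1, Nat.one_mem_divisors.2 hm0⟩
  -- the GA1 inequality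
  have hG : G M ≤ G N := by rw [hM_def]; exact hGA p hp hpN
  simp only [G] at hG
  have hdenM : (0 : ℝ) < (M : ℝ) * Real.log (Real.log M) := by
    have : (0 : ℝ) < (M : ℝ) := by exact_mod_cast Nat.pos_of_ne_zero hM0
    positivity
  have hdenN : (0 : ℝ) < (N : ℝ) * Real.log (Real.log N) := by
    have : (0 : ℝ) < (N : ℝ) := by exact_mod_cast Nat.pos_of_ne_zero hN0
    positivity
  have hG' := (div_le_div_iff₀ hdenM hdenN).mp hG
  have hMcast : (M : ℝ) = (p : ℝ) ^ (a - 1) * m := by rw [hMeq]; push_cast; ring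
  have hNcast : (N : ℝ) = (p : ℝ) ^ a * m := by rw [← hNeq]; push_cast; ring
  have hpa : (p : ℝ) ^ a = p * (p : ℝ) ^ (a - 1) := by
    rw [← pow_succ']
    congr 1
    omega
  have hm_pos : (0 : ℝ) < (m : ℝ) := by exact_mod_cast Nat.pos_of_ne_zero hm0
  have hp0 : (0 : ℝ) < (p : ℝ) := by positivity
  have key : (p : ℝ) * T * Real.log (Real.log N) ≤ (1 + p * T) * Real.log (Real.log M) := by
    have hc : (0 : ℝ) < σm * (p : ℝ) ^ (a - 1) * m := by positivity
    have e1 : (∑ d ∈ M.divisors, (d : ℝ)) * ((N : ℝ) * Real.log (Real.log N)) =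
        ((p : ℝ) * T * Real.log (Real.log N)) * (σm * (p : ℝ) ^ (a - 1) * m) := by
      rw [hσM, hNcast, hpa]; ring
    have e2 : (∑ d ∈ N.divisors, (d : ℝ)) * ((M : ℝ) * Real.log (Real.log M)) =
        ((1 + p * T) * Real.log (Real.log M)) * (σm * (p : ℝ) ^ (a - 1) * m) := by
      rw [hσN, hMcast]; ring
    rw [e1, e2] at hG'
    exact le_of_mul_le_mul_right hG' hc
  -- the log-ratio lower bound
  have hlog_ratio : Real.log p / Real.log N ≤ Real.log (Real.log N) - Real.log (Real.log M) := by
    have h1 : Real.log (Real.log N) - Real.log (Real.log M)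
        = Real.log (Real.log N / Real.log M) :=
      (Real.log_div (ne_of_gt hL0) (ne_of_gt hLM0)).symm
    rw [h1]
    have h2 : 1 - (Real.log N / Real.log M)⁻¹ ≤ Real.log (Real.log N / Real.log M) :=
      Real.one_sub_inv_le_log_of_pos (by positivity)
    have h3 : (Real.log N / Real.log M)⁻¹ = Real.log M / Real.log N := by rw [inv_div]
    rw [h3] at h2
    have h4 : 1 - Real.log M / Real.log N = Real.log p / Real.log N := by
      field_simp
      linarith [hLsplit]
    linarith [h2, h4.symm.le]
  have hTr : (p : ℝ) ^ (r - 1) ≤ T :=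
    Finset.single_le_sum (f := fun i => (p : ℝ) ^ i) (fun i _ => by positivity)
      (Finset.mem_range.2 (by omega))
  have hSr : (p : ℝ) ^ r ≤ p * T := by
    calc (p : ℝ) ^ r = p * (p : ℝ) ^ (r - 1) := by rw [← pow_succ']; congr 1; omega
      _ ≤ p * T := mul_le_mul_of_nonneg_left hTr (le_of_lt hp0)
  have hpT : (0 : ℝ) < (p : ℝ) * T := lt_of_lt_of_le (by positivity) hSr
  have main : (p : ℝ) * T * (Real.log p / Real.log N) ≤ Real.log (Real.log M) := by
    have h5 := mul_le_mul_of_nonneg_left hlog_ratio (le_of_lt hpT)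
    have h5' : (p : ℝ) * T * (Real.log (Real.log N) - Real.log (Real.log M))
        = p * T * Real.log (Real.log N) - p * T * Real.log (Real.log M) := by ring
    have key' : (1 + (p : ℝ) * T) * Real.log (Real.log M)
        = Real.log (Real.log M) + p * T * Real.log (Real.log M) := by ring
    linarith
  have main2 : (p : ℝ) * T * Real.log p ≤ Real.log (Real.log M) * Real.log N := by
    have h6 := mul_le_mul_of_nonneg_right main (le_of_lt hL0)
    have e : (p : ℝ) * T * (Real.log p / Real.log N) * Real.log N = p * T * Real.log p := by
      field_simp
    linarith [e ▸ h6]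
  have hr1 : (1 : ℝ) ≤ (r : ℝ) := by exact_mod_cast hr
  -- the main bound p^r ≤ r log N
  have hprL : (p : ℝ) ^ r ≤ r * Real.log N := by
    by_cases hcase : Real.log (Real.log M) ≤ r * Real.log p
    · have h1 : (p : ℝ) ^ r * Real.log p ≤ (r * Real.log N) * Real.log p := by
        calc (p : ℝ) ^ r * Real.log p ≤ (p * T) * Real.log p :=
            mul_le_mul_of_nonneg_right hSr (le_of_lt hLp)
          _ ≤ Real.log (Real.log M) * Real.log N := main2
          _ ≤ (r * Real.log p) * Real.log N :=
            mul_le_mul_of_nonneg_right hcase (le_of_lt hL0)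
          _ = (r * Real.log N) * Real.log p := by ring
      exact le_of_mul_le_mul_right h1 hLp
    · push_neg at hcase
      have h7 : Real.log ((p : ℝ) ^ r) < Real.log (Real.log M) := by
        rw [Real.log_pow]
        exact_mod_cast hcase
      have h8' : (p : ℝ) ^ r < Real.log M := by
        have := Real.exp_lt_exp.2 h7
        rwa [Real.exp_log (by positivity), Real.exp_log hLM0] at this
      have hMleN : Real.log M ≤ Real.log N := by linarith [hLsplit]
      have hLrL : Real.log N ≤ r * Real.log N := le_mul_of_one_le_left (le_of_lt hL0) hr1
      linarith
  have hrpos : (0 : ℝ) < (r : ℝ) := by exact_mod_cast hr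
  have hrL0 : (0 : ℝ) < r * Real.log N := mul_pos hrpos hL0
  have hinv : ∀ x : ℝ, 0 ≤ x → (x ^ (r : ℕ)) ^ ((1 : ℝ) / r) = x := by
    intro x hx
    rw [← Real.rpow_natCast x r, ← Real.rpow_mul hx, mul_one_div,
      div_self (ne_of_gt hrpos), Real.rpow_one]
  have hrLr : r * Real.log N ≤ (Real.log N) ^ (r : ℕ) := by
    have h2r : (r : ℝ) ≤ 2 ^ (r - 1) := by exact_mod_cast le_two_pow_pred r
    have h2L : (2 : ℝ) ^ (r - 1) ≤ (Real.log N) ^ (r - 1) :=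
      pow_le_pow_left₀ (by norm_num) (by linarith) _
    calc (r : ℝ) * Real.log N ≤ 2 ^ (r - 1) * Real.log N :=
        mul_le_mul_of_nonneg_right h2r (le_of_lt hL0)
      _ ≤ (Real.log N) ^ (r - 1) * Real.log N :=
        mul_le_mul_of_nonneg_right h2L (le_of_lt hL0)
      _ = (Real.log N) ^ r := by rw [← pow_succ]; congr 1; omega
  constructor
  · have h := Real.rpow_le_rpow (by positivity) hprL
      (by positivity : (0 : ℝ) ≤ (1 : ℝ) / r)
    rwa [hinv (p : ℝ) (le_of_lt hp0)] at h
  · have h := Real.rpow_le_rpow (le_of_lt hrL0) hrLr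
      (by positivity : (0 : ℝ) ≤ (1 : ℝ) / r)
    rwa [hinv (Real.log N) (le_of_lt hL0)] at h
end

section
/- If N is a GA1 number with Ω(N) ≥ 3 and p is a prime factor of N with r ≤ v_p(N), then p^r · log p ≤ log N · log log N. -/
open Real Filter

lemma sigma'_eq (n : ℕ) : sigma' n = ArithmeticFunction.sigma 1 n := by
  rw [ArithmeticFunction.sigma_one_apply]; rfl

lemma sigma'_mul_coprime {m n : ℕ} (h : m.Coprime n) :
    sigma' (m * n) = sigma' m * sigma' n := by
  simp only [sigma'_eq]
  exact (ArithmeticFunction.isMultiplicative_sigma (k := 1)).map_mul_of_coprime h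

lemma sigma'_prime_pow_succ {p : ℕ} (hp : p.Prime) (k : ℕ) :
    sigma' (p ^ (k + 1)) = p * sigma' (p ^ k) + 1 := by
  rw [sigma'_eq, sigma'_eq, ArithmeticFunction.sigma_one_apply_prime_pow hp,
    ArithmeticFunction.sigma_one_apply_prime_pow hp, geom_sum_succ]

lemma le_sigma' {n : ℕ} (hn : n ≠ 0) : n ≤ sigma' n :=
  Finset.single_le_sum (f := fun d => d) (fun _ _ => Nat.zero_le _)
    (Nat.mem_divisors_self n hn)

theorem stmt11 (N : ℕ) (hGA1 : IsGA1 N) (hΩ : 3 ≤ (ArithmeticFunction.cardFactors N))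
    (p : ℕ) (hp : p.Prime) (hpN : p ∣ N)
    (r : ℕ) (hr : 1 ≤ r) (hrv : r ≤ N.factorization p) :
    (p : ℝ) ^ r * Real.log p ≤ Real.log N * Real.log (Real.log N) := by
  obtain ⟨hN1, hNP, hG⟩ := hGA1
  have hN0 : N ≠ 0 := by omega
  set a := N.factorization p with ha_def
  have ha : 1 ≤ a := le_trans hr hrv
  set M := N / p ^ a with hM_def
  have hNM : p ^ a * M = N := Nat.ordProj_mul_ordCompl_eq_self N p
  have hM0 : M ≠ 0 := by
    intro h; rw [h, mul_zero] at hNM; exact hN0 hNM.symm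
  have hcop : p.Coprime M := Nat.coprime_ordCompl hp hN0
  set m := N / p with hm_def
  have hpm : p * m = N := Nat.mul_div_cancel' hpN
  have hm0 : m ≠ 0 := by
    intro h; rw [h, mul_zero] at hpm; exact hN0 hpm.symm
  have hmM : m = p ^ (a - 1) * M := by
    have : p * m = p * (p ^ (a - 1) * M) := by
      rw [hpm, ← mul_assoc, ← pow_succ']
      rw [Nat.sub_add_cancel ha, hNM]
    exact Nat.eq_of_mul_eq_mul_left hp.pos this
  -- m ≥ 4
  have hΩm : 2 ≤ ArithmeticFunction.cardFactors m := by
    have := ArithmeticFunction.cardFactors_mul (hp.pos.ne') hm0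
    rw [hpm, ArithmeticFunction.cardFactors_apply_prime hp] at this
    omega
  have hm4 : 4 ≤ m := by
    by_contra h
    push_neg at h
    interval_cases m <;> revert hΩm <;>
      simp [ArithmeticFunction.cardFactors_apply, Nat.primeFactorsList_zero,
        Nat.primeFactorsList_one, Nat.primeFactorsList_prime (by norm_num : Nat.Prime 2),
        Nat.primeFactorsList_prime (by norm_num : Nat.Prime 3)]
  have hN8 : 8 ≤ N := by
    have := hp.two_le
    calc 8 = 2 * 4 := rfl
    _ ≤ p * m := Nat.mul_le_mul this hm4
    _ = N := hpm
  -- sigma decompositions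
  have hsN : sigma' N = sigma' (p ^ a) * sigma' M := by
    rw [← hNM, sigma'_mul_coprime (hcop.pow_left _)]
  have hsm : sigma' m = sigma' (p ^ (a - 1)) * sigma' M := by
    rw [hmM, sigma'_mul_coprime (hcop.pow_left _)]
  have hspa : sigma' (p ^ a) = p * sigma' (p ^ (a - 1)) + 1 := by
    conv_lhs => rw [← Nat.sub_add_cancel ha]
    exact sigma'_prime_pow_succ hp _
  -- real quantities
  have hppos : (0 : ℝ) < p := by exact_mod_cast hp.pos
  have hmpos : (0 : ℝ) < m := by positivity
  have hNpos : (0 : ℝ) < N := by positivity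
  have hlogp : 0 < Real.log p :=
    Real.log_pos (by exact_mod_cast hp.one_lt)
  have hLm : 1 < Real.log m := by
    rw [Real.lt_log_iff_exp_lt hmpos]
    calc Real.exp 1 < 2.7182818286 := Real.exp_one_lt_d9
    _ < 4 := by norm_num
    _ ≤ (m : ℝ) := by exact_mod_cast hm4
  have hLNsplit : Real.log N = Real.log p + Real.log m := by
    rw [← hpm, Nat.cast_mul, Real.log_mul (ne_of_gt hppos) (ne_of_gt hmpos)]
  have hLN : 1 < Real.log N := by
    rw [hLNsplit]; linarith
  have hLmpos : 0 < Real.log m := by linarith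
  have hLNpos : 0 < Real.log N := by linarith
  have hLLm : 0 < Real.log (Real.log m) := Real.log_pos hLm
  have hLLN : 0 < Real.log (Real.log N) := Real.log_pos hLN
  have hLLmN : Real.log (Real.log m) ≤ Real.log (Real.log N) := by
    apply Real.log_le_log hLmpos
    rw [hLNsplit]; linarith
  -- key log inequality
  have hkey : Real.log p / Real.log N ≤
      Real.log (Real.log N) - Real.log (Real.log m) := by
    have h1 : Real.log (Real.log m) - Real.log (Real.log N)
        = Real.log (Real.log m / Real.log N) := by
      rw [Real.log_div (ne_of_gt hLmpos) (ne_of_gt hLNpos)]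
    have h2 : Real.log (Real.log m / Real.log N) ≤ Real.log m / Real.log N - 1 :=
      Real.log_le_sub_one_of_pos (by positivity)
    have h3 : Real.log m / Real.log N - 1 = -(Real.log p / Real.log N) := by
      field_simp
      linarith [hLNsplit]
    linarith [h1 ▸ h2, h3 ▸ (h1 ▸ h2)]
  -- use GA1 inequality
  have hGm := hG p hp hpN
  rw [show N / p = m from rfl] at hGm
  unfold G at hGm
  have hsum_m : (∑ d ∈ m.divisors, (d : ℝ)) = (sigma' m : ℝ) := by
    rw [sigma']; push_cast; ring
  have hsum_N : (∑ d ∈ N.divisors, (d : ℝ)) = (sigma' N : ℝ) := by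
    rw [sigma']; push_cast; ring
  rw [hsum_m, hsum_N, div_le_div_iff₀ (by positivity) (by positivity)] at hGm
  -- substitute
  set B : ℝ := (sigma' (p ^ (a - 1)) : ℝ) with hB_def
  set S : ℝ := (sigma' M : ℝ) with hS_def
  have hSpos : (0 : ℝ) < S := by
    have := le_sigma' hM0
    have : (1 : ℕ) ≤ sigma' M := le_trans (Nat.one_le_iff_ne_zero.mpr hM0) this
    rw [hS_def]; exact_mod_cast this
  have hBge : (p : ℝ) ^ (a - 1) ≤ B := by
    rw [hB_def]; exact_mod_cast le_sigma' (pow_ne_zero _ hp.pos.ne')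
  have hBpos : (0 : ℝ) < B := lt_of_lt_of_le (by positivity) hBge
  have hGm' : (p : ℝ) * B * Real.log (Real.log N) ≤
      ((p : ℝ) * B + 1) * Real.log (Real.log m) := by
    have hcast : (sigma' m : ℝ) = B * S := by rw [hsm]; push_cast; ring
    have hcastN : (sigma' N : ℝ) = ((p : ℝ) * B + 1) * S := by
      rw [hsN, hspa]; push_cast; ring
    have hcastNm : (N : ℝ) = p * m := by rw [← hpm]; push_cast; ring
    rw [hcast, hcastN] at hGm
    have e1 : B * S * ((N : ℝ) * Real.log (Real.log N))
        = ((p : ℝ) * B * Real.log (Real.log N)) * (S * m) := by rw [hcastNm]; ring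
    have e2 : ((p : ℝ) * B + 1) * S * ((m : ℝ) * Real.log (Real.log m))
        = (((p : ℝ) * B + 1) * Real.log (Real.log m)) * (S * m) := by ring
    rw [e1, e2] at hGm
    exact le_of_mul_le_mul_right hGm (mul_pos hSpos hmpos)
  -- conclude
  have hstep : (p : ℝ) * B * (Real.log p / Real.log N) ≤ Real.log (Real.log N) := by
    calc (p : ℝ) * B * (Real.log p / Real.log N)
        ≤ (p : ℝ) * B * (Real.log (Real.log N) - Real.log (Real.log m)) := by
          apply mul_le_mul_of_nonneg_left hkey (by positivity)
    _ ≤ Real.log (Real.log m) := by nlinarith [hGm']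
    _ ≤ Real.log (Real.log N) := hLLmN
  have hpa : (p : ℝ) ^ a ≤ (p : ℝ) * B := by
    have he : (p : ℝ) ^ a = p * (p : ℝ) ^ (a - 1) := by
      rw [← pow_succ']
      congr 1
      omega
    rw [he]
    exact mul_le_mul_of_nonneg_left hBge (le_of_lt hppos)
  have hpr : (p : ℝ) ^ r ≤ (p : ℝ) ^ a :=
    pow_le_pow_right₀ (by exact_mod_cast hp.one_le) hrv
  have : (p : ℝ) ^ r * (Real.log p / Real.log N) ≤ Real.log (Real.log N) := by
    calc (p : ℝ) ^ r * (Real.log p / Real.log N)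
        ≤ (p : ℝ) * B * (Real.log p / Real.log N) := by
          apply mul_le_mul_of_nonneg_right (le_trans hpr hpa) (by positivity)
    _ ≤ Real.log (Real.log N) := hstep
  rw [mul_div_assoc'] at this
  calc (p : ℝ) ^ r * Real.log p
      = ((p : ℝ) ^ r * Real.log p / Real.log N) * Real.log N := by
        field_simp
  _ ≤ Real.log (Real.log N) * Real.log N := by
        apply mul_le_mul_of_nonneg_right this (le_of_lt hLNpos)
  _ = Real.log N * Real.log (Real.log N) := mul_comm _ _
end

section
/- Let n be a positive integer with Ω(n) ≥ 3, and let q < p be primes dividing n with v_q(n) ≤ v_p(n). Then G(n/q) < G(n/p). -/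
open Real Filter

open Finset ArithmeticFunction
open scoped ArithmeticFunction.Omega ArithmeticFunction.sigma

lemma sigma_div_prime_eq (q n : ℕ) (hq : q.Prime) (hn : n ≠ 0) (hqn : q ∣ n) :
    (σ 1 (n / q)) * (∑ i ∈ range (n.factorization q + 1), q ^ i)
      = (σ 1 n) * (∑ i ∈ range (n.factorization q), q ^ i) := by
  have ha1 : 1 ≤ n.factorization q :=
    (Nat.Prime.dvd_iff_one_le_factorization hq hn).mp hqn
  obtain ⟨a', ha⟩ : ∃ a', n.factorization q = a' + 1 := ⟨_, (Nat.succ_pred_eq_of_pos ha1).symm⟩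
  have hcop : Nat.Coprime q (n / q ^ (a' + 1)) := by
    have := Nat.coprime_ordCompl hq hn
    rwa [← ha]
  have hself : q ^ (a' + 1) * (n / q ^ (a' + 1)) = n := by
    have := Nat.ordProj_mul_ordCompl_eq_self n q
    rwa [ha] at this
  set m := n / q ^ (a' + 1) with hm
  have hdiv : n / q = q ^ a' * m := by
    conv_lhs => rw [← hself]
    rw [pow_succ, mul_comm (q ^ a') q, mul_assoc, Nat.mul_div_cancel_left _ hq.pos]
  have h1 : σ 1 (n / q) = (σ 1 (q ^ a')) * σ 1 m := by
    rw [hdiv, isMultiplicative_sigma.map_mul_of_coprime (Nat.Coprime.pow_left a' hcop)]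
  have h2 : σ 1 n = (σ 1 (q ^ (a' + 1))) * σ 1 m := by
    conv_lhs => rw [← hself]
    rw [isMultiplicative_sigma.map_mul_of_coprime (Nat.Coprime.pow_left _ hcop)]
  rw [h1, h2, ha, sigma_one_apply_prime_pow hq, sigma_one_apply_prime_pow hq]
  ring

lemma two_pow_cardFactors_le_s14 (m : ℕ) (hm : m ≠ 0) : 2 ^ (Ω m) ≤ m := by
  rw [ArithmeticFunction.cardFactors_apply]
  conv_rhs => rw [← Nat.prod_primeFactorsList hm]
  have key : ∀ l : List ℕ, (∀ x ∈ l, 2 ≤ x) → 2 ^ l.length ≤ l.prod := by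
    intro l hl
    induction l with
    | nil => simp
    | cons x xs ih =>
      rw [List.length_cons, List.prod_cons, pow_succ']
      exact Nat.mul_le_mul (hl x (by simp)) (ih fun y hy => hl y (by simp [hy]))
  exact key _ fun x hx => (Nat.prime_of_mem_primeFactorsList hx).two_le

theorem stmt14 (n : ℕ) (hΩ : 3 ≤ (ArithmeticFunction.cardFactors n))
    (q p : ℕ) (hq : q.Prime) (hp : p.Prime) (hqp : q < p)
    (hqn : q ∣ n) (hpn : p ∣ n)
    (hv : n.factorization q ≤ n.factorization p) :
    G (n / q) < G (n / p) := by
  have hn0 : n ≠ 0 := by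
    rintro rfl
    simp at hΩ
  -- abbreviations
  set a := n.factorization q with hadef
  set b := n.factorization p with hbdef
  have ha1 : 1 ≤ a := (Nat.Prime.dvd_iff_one_le_factorization hq hn0).mp hqn
  have hb1 : 1 ≤ b := (Nat.Prime.dvd_iff_one_le_factorization hp hn0).mp hpn
  set A := ∑ i ∈ range (a + 1), q ^ i with hA
  set A' := ∑ i ∈ range a, q ^ i with hA'
  set B := ∑ i ∈ range (b + 1), p ^ i with hB
  set B' := ∑ i ∈ range b, p ^ i with hB'
  have e1 : (σ 1 (n / q)) * A = (σ 1 n) * A' := sigma_div_prime_eq q n hq hn0 hqn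
  have e2 : (σ 1 (n / p)) * B = (σ 1 n) * B' := sigma_div_prime_eq p n hp hn0 hpn
  have gq : q * A' + 1 = A := by rw [hA, geom_sum_succ]
  have gp : p * B' + 1 = B := by rw [hB, geom_sum_succ]
  have hAB : A < B := by
    calc A < ∑ i ∈ range (a + 1), p ^ i := by
          apply Finset.sum_lt_sum
          · intro i _; exact Nat.pow_le_pow_left hqp.le i
          · exact ⟨1, Finset.mem_range.mpr (by omega), by simpa using hqp⟩
      _ ≤ B := Finset.sum_le_sum_of_subset (by
          apply Finset.range_subset_range.mpr; omega)
  have hsn : 1 ≤ σ 1 n := by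
    rw [sigma_one_apply]
    have h1 : 1 ∈ n.divisors := Nat.one_mem_divisors.mpr hn0
    calc 1 ≤ ∑ d ∈ {1}, d := by simp
      _ ≤ _ := Finset.sum_le_sum_of_subset (Finset.singleton_subset_iff.mpr h1)
  -- key natural number inequality
  have key : q * (σ 1 (n / q)) < p * (σ 1 (n / p)) := by
    have hApos : 0 < A := by omega
    have hBpos : 0 < B := by omega
    apply Nat.lt_of_mul_lt_mul_right (a := A * B)
    have lhs : q * (σ 1 (n / q)) * (A * B) = (σ 1 n) * ((q * A') * B) := by
      calc q * (σ 1 (n / q)) * (A * B) = q * ((σ 1 (n / q)) * A) * B := by ring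
        _ = q * ((σ 1 n) * A') * B := by rw [e1]
        _ = (σ 1 n) * ((q * A') * B) := by ring
    have rhs : p * (σ 1 (n / p)) * (A * B) = (σ 1 n) * ((p * B') * A) := by
      calc p * (σ 1 (n / p)) * (A * B) = p * ((σ 1 (n / p)) * B) * A := by ring
        _ = p * ((σ 1 n) * B') * A := by rw [e2]
        _ = (σ 1 n) * ((p * B') * A) := by ring
    rw [lhs, rhs]
    apply mul_lt_mul_of_pos_left _ (by omega : 0 < σ 1 n)
    -- (A - 1) * B < (B - 1) * A
    have hx : q * A' * B + B = A * B := by rw [← gq]; ring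
    have hy : p * B' * A + A = B * A := by rw [← gp]; ring
    have hz : A * B = B * A := mul_comm _ _
    linarith
  -- hence cross-multiplied divisor-sum inequality
  have hnpos : 0 < n := Nat.pos_of_ne_zero hn0
  have cross : (σ 1 (n / q)) * (n / p) < (σ 1 (n / p)) * (n / q) := by
    apply Nat.lt_of_mul_lt_mul_right (a := p * q)
    have l1 : (σ 1 (n / q)) * (n / p) * (p * q) = (q * σ 1 (n / q)) * n := by
      rw [show (σ 1 (n / q)) * (n / p) * (p * q) = (σ 1 (n / q)) * ((n / p) * p) * q by ring,
        Nat.div_mul_cancel hpn]; ring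
    have l2 : (σ 1 (n / p)) * (n / q) * (p * q) = (p * σ 1 (n / p)) * n := by
      rw [show (σ 1 (n / p)) * (n / q) * (p * q) = (σ 1 (n / p)) * ((n / q) * q) * p by ring,
        Nat.div_mul_cancel hqn]; ring
    rw [l1, l2]
    exact mul_lt_mul_of_pos_right key hnpos
  -- size bounds
  have hnp0 : n / p ≠ 0 := by
    have := Nat.div_pos (Nat.le_of_dvd hnpos hpn) hp.pos; omega
  have hΩnp : 2 ≤ Ω (n / p) := by
    have hmul : n = p * (n / p) := (Nat.mul_div_cancel' hpn).symm
    have : Ω n = Ω p + Ω (n / p) := by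
      conv_lhs => rw [hmul]
      exact ArithmeticFunction.cardFactors_mul hp.ne_zero hnp0
    rw [ArithmeticFunction.cardFactors_apply_prime hp] at this
    omega
  have hnp4 : 4 ≤ n / p := by
    calc 4 = 2 ^ 2 := by norm_num
      _ ≤ 2 ^ (Ω (n / p)) := Nat.pow_le_pow_right (by norm_num) hΩnp
      _ ≤ n / p := two_pow_cardFactors_le_s14 _ hnp0
  have hple : n / p ≤ n / q := Nat.div_le_div_left hqp.le hq.pos
  -- real facts
  have hnpR : (4 : ℝ) ≤ (n / p : ℕ) := by exact_mod_cast hnp4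
  have hnqR : ((n / p : ℕ) : ℝ) ≤ ((n / q : ℕ) : ℝ) := by exact_mod_cast hple
  have hlogp : 1 < Real.log (n / p : ℕ) := by
    rw [Real.lt_log_iff_exp_lt (by linarith)]
    calc Real.exp 1 < 2.7182818286 := Real.exp_one_lt_d9
      _ < 4 := by norm_num
      _ ≤ _ := hnpR
  have hlogq : 1 < Real.log (n / q : ℕ) := by
    rw [Real.lt_log_iff_exp_lt (by linarith)]
    calc Real.exp 1 < 2.7182818286 := Real.exp_one_lt_d9
      _ < 4 := by norm_num
      _ ≤ _ := by linarith
  have hllp : 0 < Real.log (Real.log (n / p : ℕ)) := Real.log_pos hlogp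
  have hllq : 0 < Real.log (Real.log (n / q : ℕ)) := Real.log_pos hlogq
  have hllmono : Real.log (Real.log (n / p : ℕ)) ≤ Real.log (Real.log (n / q : ℕ)) :=
    Real.log_le_log (by linarith) (Real.log_le_log (by linarith) hnqR)
  -- assemble
  have hsum : ∀ m : ℕ, (∑ d ∈ m.divisors, (d : ℝ)) = ((σ 1 m : ℕ) : ℝ) := by
    intro m; rw [sigma_one_apply]; push_cast; ring
  have hdenq : (0 : ℝ) < ((n / q : ℕ) : ℝ) * Real.log (Real.log (n / q : ℕ)) := by
    apply mul_pos (by linarith) hllq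
  have hdenp : (0 : ℝ) < ((n / p : ℕ) : ℝ) * Real.log (Real.log (n / p : ℕ)) := by
    apply mul_pos (by linarith) hllp
  rw [G, G, hsum, hsum, div_lt_div_iff₀ hdenq hdenp]
  have crossR : ((σ 1 (n / q) : ℕ) : ℝ) * ((n / p : ℕ) : ℝ) <
      ((σ 1 (n / p) : ℕ) : ℝ) * ((n / q : ℕ) : ℝ) := by exact_mod_cast cross
  have hsq0 : (0 : ℝ) ≤ ((σ 1 (n / p) : ℕ) : ℝ) * ((n / q : ℕ) : ℝ) := by positivity
  calc ((σ 1 (n / q) : ℕ) : ℝ) * (((n / p : ℕ) : ℝ) * Real.log (Real.log (n / p : ℕ)))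
      = (((σ 1 (n / q) : ℕ) : ℝ) * ((n / p : ℕ) : ℝ)) * Real.log (Real.log (n / p : ℕ)) := by
        ring
    _ < (((σ 1 (n / p) : ℕ) : ℝ) * ((n / q : ℕ) : ℝ)) * Real.log (Real.log (n / p : ℕ)) :=
        mul_lt_mul_of_pos_right crossR hllp
    _ ≤ (((σ 1 (n / p) : ℕ) : ℝ) * ((n / q : ℕ) : ℝ)) * Real.log (Real.log (n / q : ℕ)) :=
        mul_le_mul_of_nonneg_left hllmono hsq0
    _ = ((σ 1 (n / p) : ℕ) : ℝ) * (((n / q : ℕ) : ℝ) * Real.log (Real.log (n / q : ℕ))) := by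
        ring
end

section
/- If N is a GA1 number with Ω(N) ≥ 3 and p = P(N) is its largest prime factor, then v_p(N) = 1. -/
open Real Filter

section GA1Helpers

lemma list_two_pow_le (l : List ℕ) (h : ∀ x ∈ l, 2 ≤ x) : 2 ^ l.length ≤ l.prod := by
  induction l with
  | nil => simp
  | cons a t ih =>
    simp only [List.length_cons, List.prod_cons, pow_succ]
    have h1 := h a (by simp)
    have h2 := ih (fun x hx => h x (by simp [hx]))
    calc 2 ^ t.length * 2 ≤ t.prod * a := Nat.mul_le_mul h2 h1
    _ = a * t.prod := by ring

lemma sigma_div_identity {N q : ℕ} (hq : q.Prime) (hN : N ≠ 0) (hdvd : q ∣ N) :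
    ((∑ d ∈ (N/q).divisors, d : ℕ) : ℝ) * ((q:ℝ)^(N.factorization q + 1) - 1)
      = ((∑ d ∈ N.divisors, d : ℕ) : ℝ) * ((q:ℝ)^(N.factorization q) - 1) := by
  set v := N.factorization q with hv
  have hv1 : 1 ≤ v := hq.factorization_pos_of_dvd hN hdvd
  obtain ⟨v', hv'⟩ : ∃ v', v = v' + 1 := ⟨v - 1, (Nat.succ_pred_eq_of_pos hv1).symm⟩
  set m := N / q ^ v with hm
  have hNm : q ^ v * m = N := Nat.ordProj_mul_ordCompl_eq_self N q
  have hqm : ¬ q ∣ m := Nat.not_dvd_ordCompl hq hN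
  have hcop : ∀ j : ℕ, Nat.Coprime (q ^ j) m := fun j =>
    (Nat.Prime.coprime_iff_not_dvd hq).mpr hqm |>.pow_left j
  have hNq : N / q = q ^ v' * m := by
    rw [← hNm, hv', pow_succ, mul_comm (q^v') q, mul_assoc, Nat.mul_div_cancel_left _ hq.pos]
  have hs : ∀ n : ℕ, (∑ d ∈ n.divisors, d) = (ArithmeticFunction.sigma 1) n := fun n =>
    (ArithmeticFunction.sigma_one_apply n).symm
  have hmul : ∀ j : ℕ, (ArithmeticFunction.sigma 1) (q ^ j * m)
      = (ArithmeticFunction.sigma 1) (q ^ j) * (ArithmeticFunction.sigma 1) m :=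
    fun j => (ArithmeticFunction.isMultiplicative_sigma).map_mul_of_coprime (hcop j)
  have hsp : ∀ j : ℕ, ((ArithmeticFunction.sigma 1) (q ^ j) : ℝ)
      = ∑ i ∈ Finset.range (j+1), (q:ℝ)^i := by
    intro j
    rw [ArithmeticFunction.sigma_one_apply, Nat.sum_divisors_prime_pow hq]
    push_cast
    simp
  have hgeom : ∀ n : ℕ, (∑ i ∈ Finset.range n, (q:ℝ)^i) * ((q:ℝ) - 1) = (q:ℝ)^n - 1 :=
    fun n => geom_sum_mul _ n
  have hq1 : (1:ℝ) < (q:ℝ) := by exact_mod_cast hq.one_lt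
  have hne : (q:ℝ) - 1 ≠ 0 := by linarith
  rw [hs, hs, hNq, ← hNm, hmul, hmul]
  push_cast
  rw [hsp, hsp]
  rw [hv']
  apply mul_right_cancel₀ hne
  linear_combination ((ArithmeticFunction.sigma 1) m : ℝ) *
    (((q:ℝ)^(v'+1+1)-1) * hgeom (v'+1) - ((q:ℝ)^(v'+1)-1) * hgeom (v'+1+1))

lemma sum_divisors_pos {n : ℕ} (hn : n ≠ 0) : 0 < ∑ d ∈ n.divisors, d := by
  have h1 : 1 ∈ n.divisors := Nat.one_mem_divisors.mpr hn
  exact lt_of_lt_of_le one_pos (Finset.single_le_sum (f := fun d => d) (fun i _ => Nat.zero_le i) h1)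

set_option maxHeartbeats 1000000 in
lemma star {N : ℕ} (hGA1 : IsGA1 N) (hΩ : 3 ≤ ArithmeticFunction.cardFactors N)
    {q : ℕ} (hq : q.Prime) (hdvd : q ∣ N) :
    ((q:ℝ)^(N.factorization q + 1) - 1) * Real.log q
      ≤ ((q:ℝ) - 1) * (Real.log N * Real.log (Real.log N)) := by
  have hN1 : 1 < N := hGA1.1
  have hN0 : N ≠ 0 := by omega
  have hN8 : 8 ≤ N := by
    calc 8 = 2^3 := rfl
    _ ≤ 2 ^ (ArithmeticFunction.cardFactors N) := Nat.pow_le_pow_right (by norm_num) hΩ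
    _ ≤ N := two_pow_cardFactors_le hN0
  have hq0 : q ≠ 0 := hq.pos.ne'
  have hNq0 : N / q ≠ 0 := Nat.div_ne_zero_iff.mpr ⟨hq0, Nat.le_of_dvd (by omega) hdvd⟩
  have hNdiv : q * (N / q) = N := Nat.mul_div_cancel' hdvd
  have hΩq : 2 ≤ ArithmeticFunction.cardFactors (N / q) := by
    have := ArithmeticFunction.cardFactors_mul hq0 hNq0
    rw [hNdiv, ArithmeticFunction.cardFactors_apply_prime hq] at this
    omega
  have hNq4 : 4 ≤ N / q := by
    calc 4 = 2^2 := rfl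
    _ ≤ 2 ^ (ArithmeticFunction.cardFactors (N/q)) := Nat.pow_le_pow_right (by norm_num) hΩq
    _ ≤ N / q := two_pow_cardFactors_le hNq0
  set Q : ℝ := (q : ℝ) with hQ
  set v : ℕ := N.factorization q with hv
  set L : ℝ := Real.log N with hL
  set M : ℝ := Real.log L with hM
  set x : ℝ := ((N / q : ℕ) : ℝ) with hx
  have hQ2 : (2:ℝ) ≤ Q := by rw [hQ]; exact_mod_cast hq.two_le
  have hx4 : (4:ℝ) ≤ x := by rw [hx]; exact_mod_cast hNq4
  have hN8' : (8:ℝ) ≤ (N:ℝ) := by exact_mod_cast hN8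
  have hl2 : (0.6931471803:ℝ) < Real.log 2 := Real.log_two_gt_d9
  have hlogx1 : 1 < Real.log x := by
    have : Real.log 4 ≤ Real.log x := Real.log_le_log (by norm_num) hx4
    have h4 : Real.log 4 = 2 * Real.log 2 := by
      rw [show (4:ℝ) = 2^2 by norm_num, Real.log_pow]; push_cast; ring
    nlinarith
  have hL2 : 2 < L := by
    have : Real.log 8 ≤ L := Real.log_le_log (by norm_num) hN8'
    have h8 : Real.log 8 = 3 * Real.log 2 := by
      rw [show (8:ℝ) = 2^3 by norm_num, Real.log_pow]; push_cast; ring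
    nlinarith
  have hM0 : 0 < M := Real.log_pos (by linarith)
  have hllx0 : 0 < Real.log (Real.log x) := Real.log_pos hlogx1
  have hx0 : (0:ℝ) < x := by linarith
  have hN0' : (0:ℝ) < (N:ℝ) := by linarith
  have hGA := hGA1.2.2 q hq hdvd
  unfold G at hGA
  have hcast : ∀ n : ℕ, (∑ d ∈ n.divisors, (d:ℝ)) = ((∑ d ∈ n.divisors, d : ℕ) : ℝ) := by
    intro n; push_cast; ring
  rw [hcast, hcast] at hGA
  set S1 : ℝ := ((∑ d ∈ (N/q).divisors, d : ℕ) : ℝ) with hS1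
  set S2 : ℝ := ((∑ d ∈ N.divisors, d : ℕ) : ℝ) with hS2
  have hS1pos : 0 < S1 := by rw [hS1]; exact_mod_cast sum_divisors_pos hNq0
  have hS2pos : 0 < S2 := by rw [hS2]; exact_mod_cast sum_divisors_pos hN0
  have hD1 : 0 < x * Real.log (Real.log x) := mul_pos hx0 hllx0
  have hD2 : 0 < (N:ℝ) * M := mul_pos hN0' hM0
  have hGA' : S1 * ((N:ℝ) * M) ≤ S2 * (x * Real.log (Real.log x)) := by
    rw [div_le_div_iff₀ hD1 hD2] at hGA
    exact hGA
  have hxN : (N:ℝ) = Q * x := by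
    rw [hx, hQ, Nat.cast_div hdvd (by exact_mod_cast hq0)]
    field_simp
  have h1 : S1 * Q * M ≤ S2 * Real.log (Real.log x) := by
    have h1' : (S1 * Q * M) * x ≤ (S2 * Real.log (Real.log x)) * x := by
      calc (S1 * Q * M) * x = S1 * ((Q * x) * M) := by ring
      _ ≤ S2 * (x * Real.log (Real.log x)) := by rw [← hxN]; exact hGA'
      _ = (S2 * Real.log (Real.log x)) * x := by ring
    exact le_of_mul_le_mul_right h1' hx0
  have hQv1 : (0:ℝ) ≤ Q^v - 1 := by
    have : (1:ℝ) ≤ Q^v := one_le_pow₀ (by linarith : (1:ℝ) ≤ Q)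
    linarith
  have hid := sigma_div_identity hq hN0 hdvd
  rw [← hS1, ← hS2, ← hv, ← hQ] at hid
  have h2 : Q * (Q^v - 1) * M ≤ (Q^(v+1) - 1) * Real.log (Real.log x) := by
    have step : S1 * Q * M * (Q^v - 1) ≤ S2 * Real.log (Real.log x) * (Q^v - 1) :=
      mul_le_mul_of_nonneg_right h1 hQv1
    have hid' : S2 * (Q^v - 1) = S1 * (Q^(v+1) - 1) := hid.symm
    have step2 : S1 * (Q * (Q^v - 1) * M) ≤ S1 * ((Q^(v+1) - 1) * Real.log (Real.log x)) := by
      calc S1 * (Q * (Q^v - 1) * M) = S1 * Q * M * (Q^v - 1) := by ring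
      _ ≤ S2 * Real.log (Real.log x) * (Q^v - 1) := step
      _ = (S2 * (Q^v - 1)) * Real.log (Real.log x) := by ring
      _ = S1 * ((Q^(v+1) - 1) * Real.log (Real.log x)) := by rw [hid']; ring
    exact le_of_mul_le_mul_left step2 hS1pos
  have hlq0 : 0 < Real.log Q := Real.log_pos (by linarith)
  have hlogxL : Real.log x = L - Real.log Q := by
    have hLeq : L = Real.log Q + Real.log x := by
      rw [hL, hxN, Real.log_mul (by linarith) (by linarith)]
    linarith
  have hy : Real.log (Real.log x) ≤ M - Real.log Q / L := by
    have hlx0 : 0 < Real.log x := by linarith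
    have hy0 : 0 < (Real.log x) / L := div_pos hlx0 (by linarith)
    have hsub := Real.log_le_sub_one_of_pos hy0
    have hrw : Real.log (Real.log x) = M + Real.log ((Real.log x) / L) := by
      rw [Real.log_div (ne_of_gt hlx0) (by linarith : L ≠ 0)]
      rw [hM]; ring
    rw [hrw, hlogxL]
    have : (L - Real.log Q) / L - 1 = - (Real.log Q / L) := by
      field_simp
      ring
    rw [hlogxL] at hsub
    rw [this] at hsub
    linarith
  have hQv1' : (0:ℝ) ≤ Q^(v+1) - 1 := by
    have : (1:ℝ) ≤ Q^(v+1) := one_le_pow₀ (by linarith : (1:ℝ) ≤ Q)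
    linarith
  have h3 : Q * (Q^v - 1) * M ≤ (Q^(v+1) - 1) * (M - Real.log Q / L) :=
    h2.trans (mul_le_mul_of_nonneg_left hy hQv1')
  have hexp : Q^(v+1) = Q * Q^v := by ring
  have h4 : (Q^(v+1) - 1) * (Real.log Q / L) ≤ (Q - 1) * M := by nlinarith [h3, hexp]
  have h5 : (Q^(v+1) - 1) * Real.log Q ≤ (Q - 1) * M * L := by
    have hLpos : (0:ℝ) < L := by linarith
    calc (Q^(v+1) - 1) * Real.log Q = ((Q^(v+1) - 1) * (Real.log Q / L)) * L := by
          field_simp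
    _ ≤ (Q - 1) * M * L := mul_le_mul_of_nonneg_right h4 (le_of_lt hLpos)
  calc ((q:ℝ)^(v+1) - 1) * Real.log q = (Q^(v+1) - 1) * Real.log Q := by rw [hQ]
  _ ≤ (Q - 1) * M * L := h5
  _ = (Q - 1) * (L * M) := by ring

lemma log_le8 {c : ℝ} {m : ℕ} (h0 : 0 < c) (h : c^8 ≤ 2^m) :
    Real.log c ≤ (m:ℝ) * 0.086643398 := by
  have h1 : Real.log (c^8) ≤ Real.log (2^m) := Real.log_le_log (by positivity) h
  rw [Real.log_pow, Real.log_pow] at h1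
  have hl2 : Real.log 2 < 0.6931471808 := Real.log_two_lt_d9
  have h2 : (m:ℝ) * Real.log 2 ≤ (m:ℝ) * 0.6931471808 :=
    mul_le_mul_of_nonneg_left (le_of_lt hl2) (Nat.cast_nonneg m)
  push_cast at h1
  nlinarith [h1, h2]

lemma log_lb {q a m : ℕ} (h : 2^m ≤ q^a) (hq : 0 < q) :
    (m:ℝ) * 0.6931471803 ≤ (a:ℝ) * Real.log q := by
  have h1 : Real.log ((2:ℝ)^m) ≤ Real.log ((q:ℝ)^a) := by
    apply Real.log_le_log (by positivity)
    exact_mod_cast h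
  rw [Real.log_pow, Real.log_pow] at h1
  have hl2 : (0.6931471803:ℝ) < Real.log 2 := Real.log_two_gt_d9
  have h2 : (m:ℝ) * 0.6931471803 ≤ (m:ℝ) * Real.log 2 :=
    mul_le_mul_of_nonneg_left (le_of_lt hl2) (Nat.cast_nonneg m)
  linarith

lemma root16 {y : ℝ} (hy : 1 ≤ y) : ∃ z : ℝ, 1 ≤ z ∧ z^16 = y ∧ Real.log y ≤ 16 * z := by
  have hy0 : (0:ℝ) ≤ y := by linarith
  refine ⟨y ^ ((16:ℝ)⁻¹), ?_, ?_, ?_⟩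
  · exact Real.one_le_rpow hy (by norm_num)
  · rw [← Real.rpow_natCast (y ^ ((16:ℝ)⁻¹)) 16, ← Real.rpow_mul hy0]
    norm_num
  · have h := Real.log_le_rpow_div hy0 (by norm_num : (0:ℝ) < (16:ℝ)⁻¹)
    rw [div_eq_mul_inv, inv_inv] at h
    linarith

lemma card_pf_le_half {N p : ℕ} (hmax : ∀ q ∈ N.primeFactors, q ≤ p) :
    N.primeFactors.card ≤ (p+1)/2 := by
  have h := Finset.card_le_card_of_injOn (f := fun q => (q+1)/2)
    (s := N.primeFactors) (t := Finset.Icc 1 ((p+1)/2)) ?_ ?_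
  · simpa using h
  · intro q hq
    have hq2 : 2 ≤ q := (Nat.prime_of_mem_primeFactors hq).two_le
    have hqp : q ≤ p := hmax q hq
    simp only [Finset.mem_coe, Finset.mem_Icc]
    omega
  · intro q1 h1 q2 h2 heq
    have hp1 := Nat.prime_of_mem_primeFactors h1
    have hp2 := Nat.prime_of_mem_primeFactors h2
    simp only at heq
    rcases hp1.eq_two_or_odd' with rfl | ⟨k, hk⟩ <;>
      rcases hp2.eq_two_or_odd' with rfl | ⟨j, hj⟩
    · rfl
    · have := hp2.two_le
      omega
    · have := hp1.two_le
      omega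
    · omega

lemma iterStep {L M P : ℝ} (c μ d ν s c' : ℝ)
    (hM : M = Real.log L) (hL1 : 1 ≤ L) (hP0 : 0 ≤ P)
    (hF2 : P^2 * 0.6931 ≤ L * M)
    (hF3 : L ≤ (P+1)/2 * Real.log (L*M/0.6931 + 1))
    (hc : L ≤ c) (hμ : Real.log c ≤ μ)
    (hd : c*μ/0.6931 + 1 ≤ d) (hν : Real.log d ≤ ν) (hν0 : 0 ≤ ν)
    (hs : c*μ ≤ s^2 * 0.6931) (hs0 : 0 ≤ s)
    (hfin : (s+1)/2*ν ≤ c') : L ≤ c' := by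
  have hL0 : (0:ℝ) < L := by linarith
  have hM0 : 0 ≤ M := hM ▸ Real.log_nonneg hL1
  have hMμ : M ≤ μ := by
    rw [hM]; exact (Real.log_le_log hL0 hc).trans hμ
  have hc0 : 0 ≤ c := by linarith
  have hLM : L * M ≤ c * μ := mul_le_mul hc hMμ hM0 hc0
  have hPs : P ≤ s := by nlinarith [sq_nonneg (P - s), sq_nonneg (P + s)]
  have harg0 : (0:ℝ) < L*M/0.6931 + 1 := by positivity
  have hlog : Real.log (L*M/0.6931 + 1) ≤ ν := by
    refine (Real.log_le_log harg0 ?_).trans hν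
    have : L*M/0.6931 ≤ c*μ/0.6931 := by
      apply div_le_div_of_nonneg_right hLM
      norm_num
    linarith
  have hlog0 : 0 ≤ Real.log (L*M/0.6931 + 1) := by
    apply Real.log_nonneg
    have : 0 ≤ L*M/0.6931 := by positivity
    linarith
  calc L ≤ (P+1)/2 * Real.log (L*M/0.6931 + 1) := hF3
  _ ≤ (s+1)/2 * ν := by
      apply mul_le_mul (by linarith) hlog hlog0 (by linarith)
  _ ≤ c' := hfin

set_option maxHeartbeats 1000000 in
lemma initial_bound {L M P : ℝ} (hM : M = Real.log L) (hL2 : 2 ≤ L)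
    (hF2 : P^2 * 0.6931 ≤ L * M) (hP0 : 0 ≤ P)
    (hF3 : L ≤ (P+1)/2 * Real.log (L*M/0.6931 + 1)) : L ≤ 432000 := by
  have hL1 : (1:ℝ) ≤ L := by linarith
  obtain ⟨T, hT1, hT16, hlogT⟩ := root16 hL1
  have hT0 : (0:ℝ) < T := by linarith
  have hMT : M ≤ 16*T := by rw [hM]; linarith
  have hM0 : 0 ≤ M := hM ▸ Real.log_nonneg hL1
  have hT16nonneg : (0:ℝ) ≤ T^16 := by positivity
  have hLM17 : L*M ≤ 16*T^17 := by
    calc L*M = T^16*M := by rw [hT16]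
    _ ≤ T^16*(16*T) := by nlinarith
    _ = 16*T^17 := by ring
  have hLM0 : 0 ≤ L*M := by positivity
  have hT1718 : T^17 ≤ T^18 := pow_le_pow_right₀ hT1 (by norm_num)
  have hP9 : P ≤ 4.81*T^9 := by
    have h1 : P^2 ≤ (4.81*T^9)^2 := by
      have : P^2 ≤ L*M/0.6931 := by
        rw [le_div_iff₀ (by norm_num : (0:ℝ) < 0.6931)]
        linarith
      have h2 : L*M/0.6931 ≤ 16*T^17/0.6931 := by
        exact div_le_div_of_nonneg_right hLM17 (by norm_num)
      have h3 : 16*T^17/0.6931 ≤ 23.09*T^17 := by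
        rw [div_le_iff₀ (by norm_num : (0:ℝ) < 0.6931)]
        nlinarith [pow_nonneg hT0.le 17]
      have h4 : (23.09:ℝ)*T^17 ≤ 23.09*T^18 := by nlinarith
      have h5 : (4.81*T^9)^2 = 23.1361*T^18 := by ring
      nlinarith [pow_nonneg hT0.le 18]
    have hb : (0:ℝ) ≤ 4.81*T^9 := by positivity
    exact le_of_pow_le_pow_left₀ (n:=2) (by norm_num) hb h1
  have hX1 : (1:ℝ) ≤ L*M/0.6931 + 1 := by
    have := div_nonneg hLM0 (by norm_num : (0:ℝ) ≤ 0.6931)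
    linarith
  obtain ⟨Z, hZ1, hZ16, hlogZ⟩ := root16 hX1
  have hT3217 : T^17 ≤ T^32 := pow_le_pow_right₀ hT1 (by norm_num)
  have hT321 : (1:ℝ) ≤ T^32 := one_le_pow₀ hT1
  have hZT : Z ≤ 1.23*T^2 := by
    have h1 : Z^16 ≤ 24.09*T^32 := by
      rw [hZ16]
      have h2 : L*M/0.6931 ≤ 23.09*T^17 := by
        rw [div_le_iff₀ (by norm_num : (0:ℝ) < 0.6931)]
        nlinarith [pow_nonneg hT0.le 17]
      nlinarith
    have h2 : (24.09:ℝ)*T^32 ≤ (1.23*T^2)^16 := by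
      have e : (1.23*T^2)^16 = 1.23^16*T^32 := by ring
      rw [e]
      have : (24.09:ℝ) ≤ 1.23^16 := by norm_num
      nlinarith
    have hb : (0:ℝ) ≤ 1.23*T^2 := by positivity
    exact le_of_pow_le_pow_left₀ (n:=16) (by norm_num) hb (h1.trans h2)
  have hlogX0 : 0 ≤ Real.log (L*M/0.6931 + 1) := Real.log_nonneg hX1
  have hT91 : (1:ℝ) ≤ T^9 := one_le_pow₀ hT1
  have hmain : L ≤ 57.2*T^11 := by
    calc L ≤ (P+1)/2 * Real.log (L*M/0.6931 + 1) := hF3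
    _ ≤ (4.81*T^9+1)/2 * (16*Z) := by
        apply mul_le_mul (by linarith) (by linarith) hlogX0 (by positivity)
    _ ≤ (5.81*T^9)/2 * (16*(1.23*T^2)) := by
        apply mul_le_mul (by linarith) (by linarith) (by linarith) (by positivity)
    _ = 57.1704*(T^9*T^2) := by ring
    _ ≤ 57.2*T^11 := by
        have : T^9*T^2 = T^11 := by ring
        rw [this]
        nlinarith [pow_nonneg hT0.le 11]
  have hT5 : T^5 ≤ 57.2 := by
    have h1 : T^5 * T^11 ≤ 57.2 * T^11 := by
      calc T^5 * T^11 = T^16 := by ring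
      _ = L := hT16
      _ ≤ 57.2*T^11 := hmain
    exact le_of_mul_le_mul_right h1 (by positivity)
  have hT225 : T ≤ 2.25 := by
    apply le_of_pow_le_pow_left₀ (n:=5) (by norm_num) (by norm_num)
    calc T^5 ≤ 57.2 := hT5
    _ ≤ 2.25^5 := by norm_num
  calc L = T^16 := hT16.symm
  _ ≤ 2.25^16 := pow_le_pow_left₀ hT0.le hT225 16
  _ ≤ 432000 := by norm_num

lemma log_eq_sum_pf {N : ℕ} (hN : N ≠ 0) :
    Real.log N = ∑ q ∈ N.primeFactors, (N.factorization q : ℝ) * Real.log q := by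
  conv_lhs => rw [← Nat.factorization_prod_pow_eq_self hN]
  rw [Nat.prod_factorization_eq_prod_primeFactors]
  push_cast
  rw [Real.log_prod]
  · apply Finset.sum_congr rfl
    intro q hq
    rw [Real.log_pow]
  · intro q hq
    have := (Nat.prime_of_mem_primeFactors hq).pos
    positivity

lemma per_prime_bound {N : ℕ} {q : ℕ} (hq : q.Prime)
    (hLM0 : 0 ≤ Real.log N * Real.log (Real.log N))
    (hstar : ((q:ℝ)^(N.factorization q + 1) - 1) * Real.log q
      ≤ ((q:ℝ) - 1) * (Real.log N * Real.log (Real.log N))) :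
    (N.factorization q : ℝ) * Real.log q
      ≤ Real.log (Real.log N * Real.log (Real.log N) / 0.6931 + 1) := by
  set W : ℝ := Real.log N * Real.log (Real.log N) with hW
  set a : ℕ := N.factorization q with ha
  have hQ2 : (2:ℝ) ≤ (q:ℝ) := by exact_mod_cast hq.two_le
  have hlq : (0.6931:ℝ) ≤ Real.log q := by
    have h2 : (0.6931471803:ℝ) < Real.log 2 := Real.log_two_gt_d9
    have := Real.log_le_log (by norm_num : (0:ℝ) < 2) hQ2
    linarith
  have hQa : ((q:ℝ))^a ≤ W / 0.6931 + 1 := by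
    have key : ((q:ℝ))^a * ((q:ℝ) * Real.log q) ≤ (W / 0.6931 + 1) * ((q:ℝ) * Real.log q) := by
      have e1 : ((q:ℝ))^a * ((q:ℝ) * Real.log q) = (q:ℝ)^(a+1) * Real.log q := by ring
      rw [e1]
      have h1 : ((q:ℝ))^(a+1) * Real.log q ≤ ((q:ℝ) - 1) * W + Real.log q := by
        nlinarith [hstar]
      have h2 : ((q:ℝ) - 1) * W + Real.log q ≤ (W / 0.6931 + 1) * ((q:ℝ) * Real.log q) := by
        have expand : (W / 0.6931 + 1) * ((q:ℝ) * Real.log q)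
            = W * ((q:ℝ) * Real.log q / 0.6931) + (q:ℝ) * Real.log q := by ring
        rw [expand]
        have hA : ((q:ℝ) - 1) * W ≤ W * ((q:ℝ) * Real.log q / 0.6931) := by
          have : ((q:ℝ) - 1) ≤ (q:ℝ) * Real.log q / 0.6931 := by
            rw [le_div_iff₀ (by norm_num : (0:ℝ) < 0.6931)]
            nlinarith
          nlinarith [hLM0]
        have hB : Real.log q ≤ (q:ℝ) * Real.log q := by nlinarith
        linarith
      linarith
    have hpos : 0 < (q:ℝ) * Real.log q := by nlinarith
    exact le_of_mul_le_mul_right key hpos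
  have hQa1 : (1:ℝ) ≤ ((q:ℝ))^a := one_le_pow₀ (by linarith)
  calc (a:ℝ) * Real.log q = Real.log (((q:ℝ))^a) := by rw [Real.log_pow]
  _ ≤ Real.log (W / 0.6931 + 1) := Real.log_le_log (by linarith) hQa

lemma L_le_of_card {N : ℕ} (hN : N ≠ 0) {B C : ℝ} (hB0 : 0 ≤ B)
    (hC : (N.primeFactors.card : ℝ) ≤ C)
    (hper : ∀ q ∈ N.primeFactors, (N.factorization q : ℝ) * Real.log q ≤ B) :
    Real.log N ≤ C * B := by
  rw [log_eq_sum_pf hN]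
  calc ∑ q ∈ N.primeFactors, (N.factorization q : ℝ) * Real.log q
      ≤ N.primeFactors.card • B := Finset.sum_le_card_nsmul _ _ _ hper
  _ = (N.primeFactors.card : ℝ) * B := by rw [nsmul_eq_mul]
  _ ≤ C * B := mul_le_mul_of_nonneg_right hC hB0

end GA1Helpers


set_option maxHeartbeats 4000000 in
theorem stmt16 (N : ℕ) (hGA1 : IsGA1 N) (hΩ : 3 ≤ (ArithmeticFunction.cardFactors N))
    (p : ℕ) (hp : p.Prime) (hpN : p ∣ N)
    (hmax : ∀ q : ℕ, q.Prime → q ∣ N → q ≤ p) :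
    N.factorization p = 1 := by
  by_contra hne
  have hN1 : 1 < N := hGA1.1
  have hN0 : N ≠ 0 := by omega
  have hv2 : 2 ≤ N.factorization p := by
    have := hp.factorization_pos_of_dvd hN0 hpN; omega
  have hN8 : 8 ≤ N := by
    calc 8 = 2^3 := rfl
    _ ≤ 2 ^ (ArithmeticFunction.cardFactors N) := Nat.pow_le_pow_right (by norm_num) hΩ
    _ ≤ N := two_pow_cardFactors_le hN0
  set L : ℝ := Real.log N with hL
  set M : ℝ := Real.log L with hM
  have hN8' : (8:ℝ) ≤ (N:ℝ) := by exact_mod_cast hN8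
  have hl2lo : (0.6931471803:ℝ) < Real.log 2 := Real.log_two_gt_d9
  have hl2hi : Real.log 2 < 0.6931471808 := Real.log_two_lt_d9
  have hL2 : 2 < L := by
    have h8 : Real.log 8 ≤ L := Real.log_le_log (by norm_num) hN8'
    have he : Real.log 8 = 3 * Real.log 2 := by
      rw [show (8:ℝ) = 2^3 by norm_num, Real.log_pow]; push_cast; ring
    linarith only [h8, he, hl2lo]
  have hL1 : (1:ℝ) ≤ L := by linarith only [hL2]
  have hM0 : 0 < M := by rw [hM]; exact Real.log_pos (by linarith only [hL2])
  have hLM0 : 0 ≤ L * M := mul_nonneg (by linarith only [hL1]) hM0.le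
  have hP2 : (2:ℝ) ≤ (p:ℝ) := by exact_mod_cast hp.two_le
  have hP0 : (0:ℝ) ≤ (p:ℝ) := by linarith only [hP2]
  have hlogP2 : Real.log 2 ≤ Real.log (p:ℝ) := Real.log_le_log (by norm_num) hP2
  have hlogP0 : 0 < Real.log (p:ℝ) := by linarith only [hlogP2, hl2lo]
  have hstar : ∀ q : ℕ, q.Prime → q ∣ N →
      ((q:ℝ)^(N.factorization q + 1) - 1) * Real.log q ≤ ((q:ℝ) - 1) * (L * M) :=
    fun q hq hd => star hGA1 hΩ hq hd
  have hF2full : (((p:ℝ))^2 + (p:ℝ) + 1) * Real.log (p:ℝ) ≤ L * M := by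
    have hs := hstar p hp hpN
    have hpow : ((p:ℝ))^3 ≤ ((p:ℝ))^(N.factorization p + 1) :=
      pow_le_pow_right₀ (by linarith only [hP2]) (by omega)
    have h1 : ((p:ℝ)-1) * ((((p:ℝ))^2 + (p:ℝ) + 1) * Real.log (p:ℝ)) ≤ ((p:ℝ)-1) * (L*M) := by
      have e : ((p:ℝ)-1) * ((((p:ℝ))^2 + (p:ℝ) + 1) * Real.log (p:ℝ))
          = (((p:ℝ))^3 - 1) * Real.log (p:ℝ) := by ring
      rw [e]
      calc (((p:ℝ))^3 - 1) * Real.log (p:ℝ)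
          ≤ (((p:ℝ))^(N.factorization p + 1) - 1) * Real.log (p:ℝ) := by
            nlinarith only [hpow, hlogP0]
      _ ≤ ((p:ℝ) - 1) * (L*M) := hs
    exact le_of_mul_le_mul_left h1 (by linarith only [hP2])
  have hF2w : ((p:ℝ))^2 * 0.6931 ≤ L * M := by
    have h1 : ((p:ℝ))^2 * 0.6931 ≤ ((p:ℝ))^2 * Real.log (p:ℝ) := by
      apply mul_le_mul_of_nonneg_left (by linarith only [hlogP2, hl2lo]) (by positivity)
    linarith only [hF2full, h1, mul_nonneg (by linarith only [hP0] : (0:ℝ) ≤ (p:ℝ)+1) hlogP0.le]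
  have hper : ∀ q ∈ N.primeFactors, (N.factorization q : ℝ) * Real.log q
      ≤ Real.log (L*M/0.6931 + 1) := by
    intro q hq
    exact per_prime_bound (Nat.prime_of_mem_primeFactors hq) hLM0
      (hstar q (Nat.prime_of_mem_primeFactors hq) (Nat.dvd_of_mem_primeFactors hq))
  have hB0 : 0 ≤ Real.log (L*M/0.6931 + 1) := by
    apply Real.log_nonneg
    have h := div_nonneg hLM0 (by norm_num : (0:ℝ) ≤ 0.6931)
    linarith only [h]
  have hcardP : (N.primeFactors.card : ℝ) ≤ ((p:ℝ)+1)/2 := by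
    have h1 : N.primeFactors.card ≤ (p+1)/2 :=
      card_pf_le_half (fun q hq => hmax q (Nat.prime_of_mem_primeFactors hq)
        (Nat.dvd_of_mem_primeFactors hq))
    calc (N.primeFactors.card : ℝ) ≤ (((p+1)/2 : ℕ) : ℝ) := by exact_mod_cast h1
    _ ≤ ((p+1 : ℕ):ℝ)/2 := Nat.cast_div_le
    _ = ((p:ℝ)+1)/2 := by push_cast; ring
  have hF3 : L ≤ ((p:ℝ)+1)/2 * Real.log (L*M/0.6931 + 1) :=
    L_le_of_card hN0 hB0 hcardP hper
  have hc0 : L ≤ 432000 := initial_bound hM (by linarith only [hL2]) hF2w hP0 hF3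
  have hmu0 : Real.log (432000:ℝ) ≤ 12.9965097 := by
    have h := log_le8 (c := 432000) (m := 150) (by norm_num) (by norm_num)
    push_cast at h; linarith only [h]
  have hnu0 : Real.log (8100552.4218:ℝ) ≤ 15.942385232 := by
    have h := log_le8 (c := 8100552.4218) (m := 184) (by norm_num) (by norm_num)
    push_cast at h; linarith only [h]
  have hc1 : L ≤ 22695.1556 :=
    iterStep 432000 12.9965097 8100552.4218 15.942385232 2846.1468 22695.1556 hM hL1 hP0 hF2w hF3
      hc0 hmu0 (by norm_num) hnu0 (by norm_num) (by norm_num) (by norm_num) (by norm_num)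
  have hmu1 : Real.log (22695.1556:ℝ) ≤ 10.050634168 := by
    have h := log_le8 (c := 22695.1556) (m := 116) (by norm_num) (by norm_num)
    push_cast at h; linarith only [h]
  have hnu1 : Real.log (329103.1589:ℝ) ≤ 12.736579506 := by
    have h := log_le8 (c := 329103.1589) (m := 147) (by norm_num) (by norm_num)
    push_cast at h; linarith only [h]
  have hc2 : L ≤ 3659.6925 :=
    iterStep 22695.1556 10.050634168 329103.1589 12.736579506 573.6743 3659.6925 hM hL1 hP0 hF2w hF3
      hc1 hmu1 (by norm_num) hnu1 (by norm_num) (by norm_num) (by norm_num) (by norm_num)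
  have hmu2 : Real.log (3659.6925:ℝ) ≤ 8.23112281 := by
    have h := log_le8 (c := 3659.6925) (m := 95) (by norm_num) (by norm_num)
    push_cast at h; linarith only [h]
  have hnu2 : Real.log (43462.807:ℝ) ≤ 10.743781352 := by
    have h := log_le8 (c := 43462.807) (m := 124) (by norm_num) (by norm_num)
    push_cast at h; linarith only [h]
  have hc3 : L ≤ 1125.2768 :=
    iterStep 3659.6925 8.23112281 43462.807 10.743781352 208.475 1125.2768 hM hL1 hP0 hF2w hF3
      hc2 hmu2 (by norm_num) hnu2 (by norm_num) (by norm_num) (by norm_num) (by norm_num)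
  have hmu3 : Real.log (1125.2768:ℝ) ≤ 7.104758636 := by
    have h := log_le8 (c := 1125.2768) (m := 82) (by norm_num) (by norm_num)
    push_cast at h; linarith only [h]
  have hnu3 : Real.log (11535.8725:ℝ) ≤ 9.357486984 := by
    have h := log_le8 (c := 11535.8725) (m := 108) (by norm_num) (by norm_num)
    push_cast at h; linarith only [h]
  have hc4 : L ≤ 507.1787 :=
    iterStep 1125.2768 7.104758636 11535.8725 9.357486984 107.4006 507.1787 hM hL1 hP0 hF2w hF3
      hc3 hmu3 (by norm_num) hnu3 (by norm_num) (by norm_num) (by norm_num) (by norm_num)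
  have hmu4 : Real.log (507.1787:ℝ) ≤ 6.238324656 := by
    have h := log_le8 (c := 507.1787) (m := 72) (by norm_num) (by norm_num)
    push_cast at h; linarith only [h]
  have hnu4 : Real.log (4565.9191:ℝ) ≤ 8.491053004 := by
    have h := log_le8 (c := 4565.9191) (m := 98) (by norm_num) (by norm_num)
    push_cast at h; linarith only [h]
  have hc5 : L ≤ 291.0912 :=
    iterStep 507.1787 6.238324656 4565.9191 8.491053004 67.5642 291.0912 hM hL1 hP0 hF2w hF3
      hc4 hmu4 (by norm_num) hnu4 (by norm_num) (by norm_num) (by norm_num) (by norm_num)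
  have hmu5 : Real.log (291.0912:ℝ) ≤ 5.718464268 := by
    have h := log_le8 (c := 291.0912) (m := 66) (by norm_num) (by norm_num)
    push_cast at h; linarith only [h]
  have hnu5 : Real.log (2402.6659:ℝ) ≤ 7.79790582 := by
    have h := log_le8 (c := 2402.6659) (m := 90) (by norm_num) (by norm_num)
    push_cast at h; linarith only [h]
  have hc6 : L ≤ 194.9742 :=
    iterStep 291.0912 5.718464268 2402.6659 7.79790582 49.0068 194.9742 hM hL1 hP0 hF2w hF3
      hc5 hmu5 (by norm_num) hnu5 (by norm_num) (by norm_num) (by norm_num) (by norm_num)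
  have hmu6 : Real.log (194.9742:ℝ) ≤ 5.285247278 := by
    have h := log_le8 (c := 194.9742) (m := 61) (by norm_num) (by norm_num)
    push_cast at h; linarith only [h]
  have hnu6 : Real.log (1487.7795:ℝ) ≤ 7.36468883 := by
    have h := log_le8 (c := 1487.7795) (m := 85) (by norm_num) (by norm_num)
    push_cast at h; linarith only [h]
  have hc7 : L ≤ 145.6692 :=
    iterStep 194.9742 5.285247278 1487.7795 7.36468883 38.5588 145.6692 hM hL1 hP0 hF2w hF3
      hc6 hmu6 (by norm_num) hnu6 (by norm_num) (by norm_num) (by norm_num) (by norm_num)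
  have hmu7 : Real.log (145.6692:ℝ) ≤ 5.025317084 := by
    have h := log_le8 (c := 145.6692) (m := 58) (by norm_num) (by norm_num)
    push_cast at h; linarith only [h]
  have hnu7 : Real.log (1057.1736:ℝ) ≤ 7.018115238 := by
    have h := log_le8 (c := 1057.1736) (m := 81) (by norm_num) (by norm_num)
    push_cast at h; linarith only [h]
  have hc8 : L ≤ 117.5496 :=
    iterStep 145.6692 5.025317084 1057.1736 7.018115238 32.4989 117.5496 hM hL1 hP0 hF2w hF3
      hc7 hmu7 (by norm_num) hnu7 (by norm_num) (by norm_num) (by norm_num) (by norm_num)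
  have hmu8 : Real.log (117.5496:ℝ) ≤ 4.852030288 := by
    have h := log_le8 (c := 117.5496) (m := 56) (by norm_num) (by norm_num)
    push_cast at h; linarith only [h]
  have hnu8 : Real.log (823.9033:ℝ) ≤ 6.758185044 := by
    have h := log_le8 (c := 823.9033) (m := 78) (by norm_num) (by norm_num)
    push_cast at h; linarith only [h]
  have hc9 : L ≤ 100.3128 :=
    iterStep 117.5496 4.852030288 823.9033 6.758185044 28.6863 100.3128 hM hL1 hP0 hF2w hF3
      hc8 hmu8 (by norm_num) hnu8 (by norm_num) (by norm_num) (by norm_num) (by norm_num)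
  have hmu9 : Real.log (100.3128:ℝ) ≤ 4.678743492 := by
    have h := log_le8 (c := 100.3128) (m := 54) (by norm_num) (by norm_num)
    push_cast at h; linarith only [h]
  have hnu9 : Real.log (678.1575:ℝ) ≤ 6.584898248 := by
    have h := log_le8 (c := 678.1575) (m := 76) (by norm_num) (by norm_num)
    push_cast at h; linarith only [h]
  have hc10 : L ≤ 88.9696 :=
    iterStep 100.3128 4.678743492 678.1575 6.584898248 26.0223 88.9696 hM hL1 hP0 hF2w hF3
      hc9 hmu9 (by norm_num) hnu9 (by norm_num) (by norm_num) (by norm_num) (by norm_num)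
  have hmu10 : Real.log (88.9696:ℝ) ≤ 4.505456696 := by
    have h := log_le8 (c := 88.9696) (m := 52) (by norm_num) (by norm_num)
    push_cast at h; linarith only [h]
  have hnu10 : Real.log (579.3418:ℝ) ≤ 6.411611452 := by
    have h := log_le8 (c := 579.3418) (m := 74) (by norm_num) (by norm_num)
    push_cast at h; linarith only [h]
  have hc11 : L ≤ 80.3016 :=
    iterStep 88.9696 4.505456696 579.3418 6.411611452 24.0488 80.3016 hM hL1 hP0 hF2w hF3
      hc10 hmu10 (by norm_num) hnu10 (by norm_num) (by norm_num) (by norm_num) (by norm_num)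
  have hmu11 : Real.log (80.3016:ℝ) ≤ 4.418813298 := by
    have h := log_le8 (c := 80.3016) (m := 51) (by norm_num) (by norm_num)
    push_cast at h; linarith only [h]
  have hnu11 : Real.log (512.9576:ℝ) ≤ 6.324968054 := by
    have h := log_le8 (c := 512.9576) (m := 73) (by norm_num) (by norm_num)
    push_cast at h; linarith only [h]
  have hc12 : L ≤ 74.7185 :=
    iterStep 80.3016 4.418813298 512.9576 6.324968054 22.6265 74.7185 hM hL1 hP0 hF2w hF3
      hc11 hmu11 (by norm_num) hnu11 (by norm_num) (by norm_num) (by norm_num) (by norm_num)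
  have hmu12 : Real.log (74.7185:ℝ) ≤ 4.3321699 := by
    have h := log_le8 (c := 74.7185) (m := 50) (by norm_num) (by norm_num)
    push_cast at h; linarith only [h]
  have hnu12 : Real.log (468.0225:ℝ) ≤ 6.151681258 := by
    have h := log_le8 (c := 468.0225) (m := 71) (by norm_num) (by norm_num)
    push_cast at h; linarith only [h]
  have hc13 : L ≤ 69.5473 :=
    iterStep 74.7185 4.3321699 468.0225 6.151681258 21.6108 69.5473 hM hL1 hP0 hF2w hF3
      hc12 hmu12 (by norm_num) hnu12 (by norm_num) (by norm_num) (by norm_num) (by norm_num)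
  have hmu13 : Real.log (69.5473:ℝ) ≤ 4.245526502 := by
    have h := log_le8 (c := 69.5473) (m := 49) (by norm_num) (by norm_num)
    push_cast at h; linarith only [h]
  have hnu13 : Real.log (427.0063:ℝ) ≤ 6.06503786 := by
    have h := log_le8 (c := 427.0063) (m := 70) (by norm_num) (by norm_num)
    push_cast at h; linarith only [h]
  have hc14 : L ≤ 65.6238 :=
    iterStep 69.5473 4.245526502 427.0063 6.06503786 20.64 65.6238 hM hL1 hP0 hF2w hF3
      hc13 hmu13 (by norm_num) hnu13 (by norm_num) (by norm_num) (by norm_num) (by norm_num)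
  have hMb : M ≤ 4.245526502 := by
    rw [hM]
    have h := log_le8 (c := 65.6238) (m := 49) (by norm_num) (by norm_num)
    push_cast at h
    exact (Real.log_le_log (by linarith only [hL2]) hc14).trans (by linarith only [h])
  have hLMb : L * M ≤ 278.61 := by
    have h := mul_le_mul hc14 hMb hM0.le (by norm_num : (0:ℝ) ≤ 65.6238)
    have h2 : (65.6238:ℝ) * 4.245526502 ≤ 278.61 := by norm_num
    linarith only [h, h2]
  have hp7 : p ≤ 7 := by
    by_contra h7
    push_neg at h7
    have hp11 : 11 ≤ p := by
      by_contra h11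
      push_neg at h11
      interval_cases p <;> revert hp <;> decide
    have hP11 : (11:ℝ) ≤ (p:ℝ) := by exact_mod_cast hp11
    have hlog11 : (2.3567:ℝ) ≤ Real.log (p:ℝ) := by
      have h1 := log_lb (q:=11) (a:=5) (m:=17) (by norm_num) (by norm_num)
      push_cast at h1
      have h2 : Real.log (11:ℝ) ≤ Real.log (p:ℝ) := Real.log_le_log (by norm_num) hP11
      linarith only [h1, h2]
    have h133 : (133:ℝ) ≤ ((p:ℝ))^2 + (p:ℝ) + 1 := by
      nlinarith only [hP11, sq_nonneg ((p:ℝ) - 11)]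
    have hmul : (133:ℝ) * 2.3567 ≤ (((p:ℝ))^2 + (p:ℝ) + 1) * Real.log (p:ℝ) :=
      mul_le_mul h133 hlog11 (by norm_num) (by positivity)
    linarith only [hF2full, hLMb, hmul]
  have hB403 : Real.log (L*M/0.6931 + 1) ≤ 6.06503786 := by
    have harg : L*M/0.6931 + 1 ≤ 402.99 := by
      have h1 : L*M/0.6931 ≤ 278.61/0.6931 := div_le_div_of_nonneg_right hLMb (by norm_num)
      have h2 : (278.61:ℝ)/0.6931 ≤ 401.99 := by norm_num
      linarith only [h1, h2]
    have hlog := log_le8 (c := 402.99) (m := 70) (by norm_num) (by norm_num)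
    push_cast at hlog
    have harg0 : (0:ℝ) < L*M/0.6931 + 1 := by positivity
    exact (Real.log_le_log harg0 harg).trans (by linarith only [hlog])
  have hsubP : N.primeFactors ⊆ Finset.Icc 2 p := by
    intro q hq
    have hqp := Nat.prime_of_mem_primeFactors hq
    have := hmax q hqp (Nat.dvd_of_mem_primeFactors hq)
    simp only [Finset.mem_Icc]
    exact ⟨hqp.two_le, this⟩
  have hvanish : ∀ (S : Finset ℕ), N.primeFactors ⊆ S →
      L = ∑ q ∈ S, (N.factorization q : ℝ) * Real.log q := by
    intro S hS
    rw [hL, log_eq_sum_pf hN0]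
    apply Finset.sum_subset hS
    intro x _ hnx
    have h0 : N.factorization x = 0 := by
      rwa [← Nat.support_factorization, Finsupp.notMem_support_iff] at hnx
    rw [h0]
    norm_num
  have hpcases : p = 2 ∨ p = 3 ∨ p = 5 ∨ p = 7 := by
    have h2 := hp.two_le
    interval_cases p <;> revert hp <;> decide
  have hlog3lo : (1.03972077:ℝ) ≤ Real.log (3:ℝ) := by
    have h := log_lb (q:=3) (a:=2) (m:=3) (by norm_num) (by norm_num)
    push_cast at h
    linarith only [h]
  have hlog3hi : Real.log (3:ℝ) ≤ 1.126364174 := by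
    have h := log_le8 (c := 3) (m := 13) (by norm_num) (by norm_num)
    push_cast at h
    linarith only [h]
  rcases hpcases with rfl | rfl | rfl | rfl
  · -- p = 2
    have hsub : N.primeFactors ⊆ ({2} : Finset ℕ) := by
      intro q hq
      have h := hsubP hq
      simp only [Finset.mem_Icc] at h
      simp only [Finset.mem_singleton]
      omega
    have hcard1 : (N.primeFactors.card : ℝ) ≤ 1 := by
      have h1 := Finset.card_le_card hsub
      have h2 : ({2} : Finset ℕ).card = 1 := by decide
      rw [h2] at h1
      exact_mod_cast h1
    have hLb : L ≤ 6.0651 := by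
      have h := L_le_of_card hN0 hB0 hcard1 hper
      linarith only [h, hB403]
    have hMb2 : M ≤ 1.819511358 := by
      rw [hM]
      have h := log_le8 (c := 6.0651) (m := 21) (by norm_num) (by norm_num)
      push_cast at h
      exact (Real.log_le_log (by linarith only [hL2]) hLb).trans (by linarith only [h])
    have hLM2 : L * M ≤ 11.0356 := by
      have h := mul_le_mul hLb hMb2 hM0.le (by norm_num : (0:ℝ) ≤ 6.0651)
      have h2 : (6.0651:ℝ) * 1.819511358 ≤ 11.0356 := by norm_num
      linarith only [h, h2]
    have ha3 : N.factorization 2 ≤ 3 := by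
      by_contra ha
      have hs2 := hstar 2 (by norm_num) hpN
      have hpow : (32:ℝ) ≤ (2:ℝ)^(N.factorization 2 + 1) := by
        calc (32:ℝ) = 2^5 := by norm_num
        _ ≤ _ := pow_le_pow_right₀ (by norm_num) (by omega)
      push_cast at hs2
      have h1 : (31:ℝ) * 0.6931471803 ≤ ((2:ℝ)^(N.factorization 2 + 1) - 1) * Real.log 2 :=
        mul_le_mul (by linarith only [hpow]) hl2lo.le (by norm_num) (by linarith only [hpow])
      linarith only [h1, hs2, hLM2]
    have hLsum : L = (N.factorization 2 : ℝ) * Real.log 2 := by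
      rw [hvanish {2} hsub, Finset.sum_singleton]
      push_cast
      ring
    have ha3' : (N.factorization 2 : ℝ) ≤ 3 := by exact_mod_cast ha3
    have ha0 : (0:ℝ) ≤ (N.factorization 2 : ℝ) := Nat.cast_nonneg _
    have hLsmall : L ≤ 2.07945 := by
      rw [hLsum]
      have h := mul_le_mul ha3' hl2hi.le (by linarith only [hl2lo]) (by norm_num : (0:ℝ) ≤ 3)
      have h2 : (3:ℝ) * 0.6931471808 ≤ 2.07945 := by norm_num
      linarith only [h, h2]
    have hMsmall : M ≤ 0.779790582 := by
      rw [hM]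
      have h := log_le8 (c := 2.07945) (m := 9) (by norm_num) (by norm_num)
      push_cast at h
      exact (Real.log_le_log (by linarith only [hL2]) hLsmall).trans (by linarith only [h])
    have hLMsmall : L * M ≤ 1.6216 := by
      have h := mul_le_mul hLsmall hMsmall hM0.le (by norm_num : (0:ℝ) ≤ 2.07945)
      have h2 : (2.07945:ℝ) * 0.779790582 ≤ 1.6216 := by norm_num
      linarith only [h, h2]
    push_cast at hF2full
    norm_num at hF2full
    linarith only [hF2full, hl2lo, hLMsmall]
  · -- p = 3
    have hsub : N.primeFactors ⊆ ({2, 3} : Finset ℕ) := by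
      intro q hq
      have h := hsubP hq
      simp only [Finset.mem_Icc] at h
      simp only [Finset.mem_insert, Finset.mem_singleton]
      omega
    have hcard2 : (N.primeFactors.card : ℝ) ≤ 2 := by
      have h1 := Finset.card_le_card hsub
      have h2 : ({2, 3} : Finset ℕ).card = 2 := by decide
      rw [h2] at h1
      exact_mod_cast h1
    have hLb : L ≤ 12.1301 := by
      have h := L_le_of_card hN0 hB0 hcard2 hper
      linarith only [h, hB403]
    have hMb2 : M ≤ 2.512658542 := by
      rw [hM]
      have h := log_le8 (c := 12.1301) (m := 29) (by norm_num) (by norm_num)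
      push_cast at h
      exact (Real.log_le_log (by linarith only [hL2]) hLb).trans (by linarith only [h])
    have hLM2 : L * M ≤ 30.479 := by
      have h := mul_le_mul hLb hMb2 hM0.le (by norm_num : (0:ℝ) ≤ 12.1301)
      have h2 : (12.1301:ℝ) * 2.512658542 ≤ 30.479 := by norm_num
      linarith only [h, h2]
    have hb2 : N.factorization 3 = 2 := by
      by_contra hb
      have hs3 := hstar 3 (by norm_num) hpN
      have hpow : (81:ℝ) ≤ (3:ℝ)^(N.factorization 3 + 1) := by
        calc (81:ℝ) = 3^4 := by norm_num
        _ ≤ _ := pow_le_pow_right₀ (by norm_num) (by omega)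
      push_cast at hs3
      have h1 : (80:ℝ) * 1.03972077 ≤ ((3:ℝ)^(N.factorization 3 + 1) - 1) * Real.log 3 :=
        mul_le_mul (by linarith only [hpow]) hlog3lo (by norm_num) (by linarith only [hpow])
      linarith only [h1, hs3, hLM2]
    have ha4 : N.factorization 2 ≤ 4 := by
      by_cases h2 : 2 ∣ N
      · by_contra ha
        have hs2 := hstar 2 (by norm_num) h2
        have hpow : (64:ℝ) ≤ (2:ℝ)^(N.factorization 2 + 1) := by
          calc (64:ℝ) = 2^6 := by norm_num
          _ ≤ _ := pow_le_pow_right₀ (by norm_num) (by omega)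
        push_cast at hs2
        have h1 : (63:ℝ) * 0.6931471803 ≤ ((2:ℝ)^(N.factorization 2 + 1) - 1) * Real.log 2 :=
          mul_le_mul (by linarith only [hpow]) hl2lo.le (by norm_num) (by linarith only [hpow])
        linarith only [h1, hs2, hLM2]
      · rw [Nat.factorization_eq_zero_of_not_dvd h2]
        norm_num
    have hLsum : L = (N.factorization 2 : ℝ) * Real.log 2
        + (N.factorization 3 : ℝ) * Real.log 3 := by
      rw [hvanish {2, 3} hsub, Finset.sum_pair (by norm_num : (2:ℕ) ≠ 3)]
      push_cast
      ring
    have ha4' : (N.factorization 2 : ℝ) ≤ 4 := by exact_mod_cast ha4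
    have ha0 : (0:ℝ) ≤ (N.factorization 2 : ℝ) := Nat.cast_nonneg _
    have hLsmall : L ≤ 5.02532 := by
      rw [hLsum, hb2]
      push_cast
      have h := mul_le_mul ha4' hl2hi.le (by linarith only [hl2lo]) (by norm_num : (0:ℝ) ≤ 4)
      have h2 : (4:ℝ) * 0.6931471808 + 2 * 1.126364174 ≤ 5.02532 := by norm_num
      linarith only [h, h2, hlog3hi]
    have hMsmall : M ≤ 1.646224562 := by
      rw [hM]
      have h := log_le8 (c := 5.02532) (m := 19) (by norm_num) (by norm_num)
      push_cast at h
      exact (Real.log_le_log (by linarith only [hL2]) hLsmall).trans (by linarith only [h])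
    have hLMsmall : L * M ≤ 8.2729 := by
      have h := mul_le_mul hLsmall hMsmall hM0.le (by norm_num : (0:ℝ) ≤ 5.02532)
      have h2 : (5.02532:ℝ) * 1.646224562 ≤ 8.2729 := by norm_num
      linarith only [h, h2]
    push_cast at hF2full
    norm_num at hF2full
    linarith only [hF2full, hlog3lo, hLMsmall]
  · -- p = 5
    have hsub : N.primeFactors ⊆ ({2, 3, 5} : Finset ℕ) := by
      intro q hq
      have h := hsubP hq
      have hqp := Nat.prime_of_mem_primeFactors hq
      simp only [Finset.mem_Icc] at h
      obtain ⟨hq2, hqle⟩ := h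
      simp only [Finset.mem_insert, Finset.mem_singleton]
      interval_cases q <;> revert hqp <;> decide
    have hcard3 : (N.primeFactors.card : ℝ) ≤ 3 := by
      have h1 := Finset.card_le_card hsub
      have h2 : ({2, 3, 5} : Finset ℕ).card = 3 := by decide
      rw [h2] at h1
      exact_mod_cast h1
    have hLb : L ≤ 18.1952 := by
      have h := L_le_of_card hN0 hB0 hcard3 hper
      linarith only [h, hB403]
    have hMb2 : M ≤ 2.945875532 := by
      rw [hM]
      have h := log_le8 (c := 18.1952) (m := 34) (by norm_num) (by norm_num)
      push_cast at h
      exact (Real.log_le_log (by linarith only [hL2]) hLb).trans (by linarith only [h])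
    have hLM2 : L * M ≤ 53.601 := by
      have h := mul_le_mul hLb hMb2 hM0.le (by norm_num : (0:ℝ) ≤ 18.1952)
      have h2 : (18.1952:ℝ) * 2.945875532 ≤ 53.601 := by norm_num
      linarith only [h, h2]
    have hB2 : Real.log (L*M/0.6931 + 1) ≤ 4.418813298 := by
      have harg : L*M/0.6931 + 1 ≤ 78.34 := by
        have h1 : L*M/0.6931 ≤ 53.601/0.6931 := div_le_div_of_nonneg_right hLM2 (by norm_num)
        have h2 : (53.601:ℝ)/0.6931 ≤ 77.34 := by norm_num
        linarith only [h1, h2]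
      have hlog := log_le8 (c := 78.34) (m := 51) (by norm_num) (by norm_num)
      push_cast at hlog
      have harg0 : (0:ℝ) < L*M/0.6931 + 1 := by positivity
      exact (Real.log_le_log harg0 harg).trans (by linarith only [hlog])
    have hLb2 : L ≤ 13.2565 := by
      have h := L_le_of_card hN0 hB0 hcard3 hper
      linarith only [h, hB2]
    have hMb3 : M ≤ 2.59930194 := by
      rw [hM]
      have h := log_le8 (c := 13.2565) (m := 30) (by norm_num) (by norm_num)
      push_cast at h
      exact (Real.log_le_log (by linarith only [hL2]) hLb2).trans (by linarith only [h])
    have hLM3 : L * M ≤ 34.46 := by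
      have h := mul_le_mul hLb2 hMb3 hM0.le (by norm_num : (0:ℝ) ≤ 13.2565)
      have h2 : (13.2565:ℝ) * 2.59930194 ≤ 34.46 := by norm_num
      linarith only [h, h2]
    have hlog5 : (1.58433641:ℝ) ≤ Real.log (5:ℝ) := by
      have h := log_lb (q:=5) (a:=7) (m:=16) (by norm_num) (by norm_num)
      push_cast at h
      linarith only [h]
    push_cast at hF2full
    norm_num at hF2full
    linarith only [hF2full, hlog5, hLM3]
  · -- p = 7
    have hsub : N.primeFactors ⊆ ({2, 3, 5, 7} : Finset ℕ) := by
      intro q hq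
      have h := hsubP hq
      have hqp := Nat.prime_of_mem_primeFactors hq
      simp only [Finset.mem_Icc] at h
      obtain ⟨hq2, hqle⟩ := h
      simp only [Finset.mem_insert, Finset.mem_singleton]
      interval_cases q <;> revert hqp <;> decide
    have hcard4 : (N.primeFactors.card : ℝ) ≤ 4 := by
      have h1 := Finset.card_le_card hsub
      have h2 : ({2, 3, 5, 7} : Finset ℕ).card = 4 := by decide
      rw [h2] at h1
      exact_mod_cast h1
    have hLb : L ≤ 24.2602 := by
      have h := L_le_of_card hN0 hB0 hcard4 hper
      linarith only [h, hB403]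
    have hMb2 : M ≤ 3.205805726 := by
      rw [hM]
      have h := log_le8 (c := 24.2602) (m := 37) (by norm_num) (by norm_num)
      push_cast at h
      exact (Real.log_le_log (by linarith only [hL2]) hLb).trans (by linarith only [h])
    have hLM2 : L * M ≤ 77.778 := by
      have h := mul_le_mul hLb hMb2 hM0.le (by norm_num : (0:ℝ) ≤ 24.2602)
      have h2 : (24.2602:ℝ) * 3.205805726 ≤ 77.778 := by norm_num
      linarith only [h, h2]
    have hlog7 : (1.9408121:ℝ) ≤ Real.log (7:ℝ) := by
      have h := log_lb (q:=7) (a:=5) (m:=14) (by norm_num) (by norm_num)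
      push_cast at h
      linarith only [h]
    push_cast at hF2full
    norm_num at hF2full
    linarith only [hF2full, hlog7, hLM2]
end

section
/- The only prime power that is a GA1 number is 4; that is, if N = p^k is composite and G(N) ≥ G(N/p), then N = 4. -/
open Real Filter

lemma aux_nat' (a b : ℕ) : (b+2)*(b+1)*(a+1) < (a+2)^(b+2) := by
  induction b with
  | zero =>
    have h : (a+2)^(0+2) = (a+2)*(a+2) := by ring
    nlinarith [h, sq_nonneg a]
  | succ n ih =>
    rcases Nat.eq_zero_or_pos n with h0 | h1
    · subst h0
      have h : (a+2)^(0+1+2) = (a+2)*(a+2)*(a+2) := by ring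
      nlinarith [h]
    · have key : (n+3)*(n+2) ≤ 2*((n+2)*(n+1)) := by nlinarith
      calc (n+1+2)*(n+1+1)*(a+1) = (n+3)*(n+2)*(a+1) := by ring
        _ ≤ 2*((n+2)*(n+1))*(a+1) := Nat.mul_le_mul_right _ key
        _ = 2*((n+2)*(n+1)*(a+1)) := by ring
        _ < 2*((a+2)^(n+2)) := by omega
        _ ≤ (a+2)*((a+2)^(n+2)) := Nat.mul_le_mul_right _ (by omega)
        _ = (a+2)^(n+1+2) := by ring

lemma aux_nat (p k : ℕ) (hp : 2 ≤ p) (hk : 2 ≤ k) : k * (k-1) * (p-1) < p^k := by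
  obtain ⟨a, rfl⟩ : ∃ a, p = a+2 := ⟨p-2, by omega⟩
  obtain ⟨b, rfl⟩ : ∃ b, k = b+2 := ⟨k-2, by omega⟩
  have e1 : b+2-1 = b+1 := by omega
  have e2 : a+2-1 = a+1 := by omega
  rw [e1, e2]
  exact aux_nat' a b

set_option maxHeartbeats 1000000 in
theorem stmt18 (N p k : ℕ) (hp : p.Prime) (hk : 2 ≤ k) (hN : N = p ^ k)
    (h : G (N / p) ≤ G N) :
    N = 4 := by
  by_contra hne
  have hp2 : 2 ≤ p := hp.two_le
  set m := p ^ (k-1) with hm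
  have hNm : N = p * m := by rw [hN, hm, ← pow_succ']; congr 1; omega
  have hNp : N / p = m := by rw [hNm, Nat.mul_div_cancel_left _ hp.pos]
  have hm3 : 3 ≤ m := by
    rcases Nat.lt_or_ge p 3 with h2 | h3
    · have hpe : p = 2 := by omega
      have hk3 : 3 ≤ k := by
        by_contra hc
        have : k = 2 := by omega
        apply hne; rw [hN, hpe, this]; norm_num
      calc 3 ≤ 2^2 := by norm_num
        _ ≤ 2^(k-1) := Nat.pow_le_pow_right (by norm_num) (by omega)
        _ = m := by rw [hm, hpe]
    · calc 3 ≤ p := h3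
        _ = p^1 := (pow_one p).symm
        _ ≤ p^(k-1) := Nat.pow_le_pow_right (by omega) (by omega)
  -- real setup
  set q : ℝ := (p : ℝ) with hq
  have hq2 : (2:ℝ) ≤ q := by rw [hq]; exact_mod_cast hp2
  have hq0 : 0 < q := by linarith
  have hmR : (m:ℝ) = q^(k-1) := by rw [hm]; push_cast; ring
  have hm0 : (3:ℝ) ≤ (m:ℝ) := by exact_mod_cast hm3
  have hNR : (N:ℝ) = q * (m:ℝ) := by rw [hNm]; push_cast; ring
  have hN0 : (0:ℝ) < (N:ℝ) := by rw [hNR]; positivity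
  -- sums
  set Sm : ℝ := ∑ i ∈ Finset.range k, q ^ i with hSm
  have hσm : ∑ d ∈ m.divisors, (d:ℝ) = Sm := by
    rw [hm, Nat.sum_divisors_prime_pow hp, hSm]
    have : k - 1 + 1 = k := by omega
    rw [this]
    push_cast
    rfl
  have hσN : ∑ d ∈ N.divisors, (d:ℝ) = q * Sm + 1 := by
    rw [hN, Nat.sum_divisors_prime_pow hp]
    push_cast
    rw [hSm, hq]
    exact geom_sum_succ (R := ℝ)
  have hSm_ge : (m:ℝ) ≤ Sm := by
    rw [hmR, hSm]
    exact Finset.single_le_sum (f := fun i => q^i) (fun i _ => by positivity)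
      (Finset.mem_range.mpr (by omega))
  have hSm0 : 0 < Sm := by linarith
  -- logs
  have hlogm1 : 1 < Real.log m := by
    have h3 : Real.exp 1 < 3 := by
      have := Real.exp_one_lt_d9; linarith
    rw [Real.lt_log_iff_exp_lt (by linarith)]
    linarith
  have hlogm0 : 0 < Real.log m := by linarith
  have hlogp0 : 0 < Real.log q := Real.log_pos (by linarith)
  have hlogN : Real.log N = Real.log q + Real.log m := by
    rw [hNR, Real.log_mul (by linarith) (by linarith)]
  have hlogN0 : 0 < Real.log N := by rw [hlogN]; linarith
  set Lm : ℝ := Real.log (Real.log m) with hLm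
  set LN : ℝ := Real.log (Real.log N) with hLN
  have hLm0 : 0 < Lm := Real.log_pos hlogm1
  -- (a) LN - Lm ≥ log q / log N
  have ha : Real.log q / Real.log N ≤ LN - Lm := by
    have h1 : Lm - LN ≤ Real.log m / Real.log N - 1 := by
      rw [hLm, hLN, ← Real.log_div (by linarith) (by linarith)]
      exact Real.log_le_sub_one_of_pos (by positivity)
    rw [div_le_iff₀ hlogN0]
    have h1' := mul_le_mul_of_nonneg_right h1 hlogN0.le
    have h2 : (Real.log m / Real.log N - 1) * Real.log N = Real.log m - Real.log N := by
      field_simp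
    rw [h2] at h1'
    nlinarith [hlogN]
  -- (c) Lm * log N < N * log q
  have hc : Lm * Real.log N < (N:ℝ) * Real.log q := by
    have h1 : Lm ≤ Real.log m - 1 := Real.log_le_sub_one_of_pos hlogm0
    have h2 : Real.log m = ((k:ℝ) - 1) * Real.log q := by
      rw [hmR, Real.log_pow]
      have : ((k - 1 : ℕ) : ℝ) = (k:ℝ) - 1 := by
        have : 1 ≤ k := by omega
        push_cast [this]; ring
      rw [this]
    have h3 : Real.log q ≤ q - 1 := by
      have := Real.log_le_sub_one_of_pos hq0; linarith
    have h4 : (k:ℝ) * ((k:ℝ)-1) * (q-1) < q^k := by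
      obtain ⟨a, hpa⟩ : ∃ a, p = a+2 := ⟨p-2, by omega⟩
      obtain ⟨b, hkb⟩ : ∃ b, k = b+2 := ⟨k-2, by omega⟩
      have hab := aux_nat' a b
      have h' : ((b:ℝ)+2)*((b:ℝ)+1)*((a:ℝ)+1) < ((a:ℝ)+2)^(b+2) := by exact_mod_cast hab
      rw [hq, hpa, hkb]
      push_cast
      nlinarith [h']
    have hNq : (N:ℝ) = q^k := by rw [hq]; exact_mod_cast hN
    have hlogNk : Real.log N = (k:ℝ) * Real.log q := by rw [hNq, Real.log_pow]
    have hk0 : (0:ℝ) < (k:ℝ) := by positivity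
    have hk1R : (1:ℝ) ≤ (k:ℝ) - 1 := by
      have : (2:ℝ) ≤ (k:ℝ) := by exact_mod_cast hk
      linarith
    have hmul : ((k:ℝ)-1) * Real.log q ≤ ((k:ℝ)-1) * (q-1) :=
      mul_le_mul_of_nonneg_left h3 (by linarith)
    have step1 : Lm < ((k:ℝ)-1)*(q-1) := by linarith [h1, hmul, h2.le, h2.ge]
    have stepA : Lm * (k:ℝ) < q^k := by
      have t := mul_lt_mul_of_pos_right step1 hk0
      nlinarith [t, h4]
    rw [hlogNk, hNq]
    calc Lm * ((k:ℝ) * Real.log q) = Lm * (k:ℝ) * Real.log q := by ring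
      _ < q^k * Real.log q := mul_lt_mul_of_pos_right stepA hlogp0
  -- key: Lm < q * Sm * (LN - Lm)
  have hkey : Lm < q * Sm * (LN - Lm) := by
    have h1 : (N:ℝ) * (Real.log q / Real.log N) ≤ q * Sm * (LN - Lm) := by
      have hd : 0 ≤ Real.log q / Real.log N := by positivity
      have hNle : (N:ℝ) ≤ q * Sm := by
        rw [hNR]; exact mul_le_mul_of_nonneg_left hSm_ge hq0.le
      calc (N:ℝ) * (Real.log q / Real.log N) ≤ (q * Sm) * (Real.log q / Real.log N) :=
            mul_le_mul_of_nonneg_right hNle hd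
        _ ≤ q * Sm * (LN - Lm) := by
          apply mul_le_mul_of_nonneg_left ha (mul_pos hq0 hSm0).le
    have h2 : Lm < (N:ℝ) * (Real.log q / Real.log N) := by
      rw [show (N:ℝ) * (Real.log q / Real.log N) = (N:ℝ) * Real.log q / Real.log N by ring,
        lt_div_iff₀ hlogN0]
      exact hc
    linarith
  -- conclude G N < G m
  have hm0' : (0:ℝ) < (m:ℝ) := by linarith
  have hLmLN : Lm < LN := by
    have hpos : 0 < Real.log q / Real.log N := by positivity
    linarith [ha]
  have hLN0 : 0 < LN := lt_trans hLm0 hLmLN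
  have hGN : G N < G m := by
    unfold G
    rw [hσN, hσm]
    rw [div_lt_div_iff₀ (by rw [← hLN]; exact mul_pos hN0 hLN0)
      (by rw [← hLm]; exact mul_pos hm0' hLm0)]
    rw [← hLm, ← hLN, hNR]
    nlinarith [mul_lt_mul_of_pos_left hkey hm0']
  rw [hNp] at h
  linarith
end

section
/- A squarefree product of three distinct primes N = p₁p₂p₃ cannot be a GA1 number. Equivalently, if N is squarefree with Ω(N) = 3, then G(N) < G(N/p) for some prime factor p of N. -/
open Real Filter

-- log(3/2) ≥ 2/5
lemma log32_ge : (2:ℝ)/5 ≤ Real.log (3/2) := by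
  rw [Real.le_log_iff_exp_le (by norm_num)]
  have h1 : Real.exp (2/5) ^ 5 = Real.exp 2 := by
    rw [← Real.exp_nat_mul]; norm_num
  have h2 : Real.exp 2 = Real.exp 1 ^ 2 := by
    rw [← Real.exp_nat_mul]; norm_num
  have h3 := Real.exp_one_lt_d9
  have h4 : 0 < Real.exp (2/5) := Real.exp_pos _
  nlinarith [h4, Real.exp_pos 1, sq_nonneg (Real.exp (2/5)), sq_nonneg (Real.exp (2/5) - 3/2),
    sq_nonneg (Real.exp (2/5) + 3/2), sq_nonneg (Real.exp (2/5)^2 - 9/4)]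

lemma keylog (p : ℝ) (h5 : 5 ≤ p) (hc : p ≤ 7 ∨ 11 ≤ p) :
    Real.log (2 * Real.log p) ≤ p * Real.log (3/2) := by
  have hp1 : (1:ℝ) < p := by linarith
  have hlp : 0 < Real.log p := Real.log_pos hp1
  have l32 := log32_ge
  rcases hc with hc | hc
  · -- log p ≤ 2 since p ≤ 7 < e²
    have he2 : (7:ℝ) ≤ Real.exp 2 := by
      have h2 : Real.exp 2 = Real.exp 1 ^ 2 := by rw [← Real.exp_nat_mul]; norm_num
      have h3 := Real.exp_one_gt_d9
      nlinarith [Real.exp_pos 1]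
    have hlp2 : Real.log p ≤ 2 := by
      rw [Real.log_le_iff_le_exp (by linarith)]; linarith
    have h4 : Real.log (2 * Real.log p) ≤ Real.log 4 := by
      apply Real.log_le_log (by linarith); linarith
    have h5' : Real.log 4 = 2 * Real.log 2 := by
      rw [show (4:ℝ) = 2^2 by norm_num, Real.log_pow]; push_cast; ring
    have := Real.log_two_lt_d9
    nlinarith
  · -- p ≥ 11
    set t := Real.sqrt p with ht
    have htp : t ^ 2 = p := Real.sq_sqrt (by linarith)
    have ht33 : (33:ℝ)/10 ≤ t := by
      rw [ht, Real.le_sqrt (by norm_num) (by linarith)]; nlinarith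
    have htpos : 0 < t := by linarith
    have hlogt : Real.log t ≤ t - 1 := Real.log_le_sub_one_of_pos htpos
    have hlogp : Real.log p = 2 * Real.log t := by
      rw [← htp, Real.log_pow]; push_cast; ring
    have h2lp : 2 * Real.log p ≤ 4 * t := by nlinarith
    have h4 : Real.log (2 * Real.log p) ≤ Real.log (4 * t) := by
      apply Real.log_le_log (by linarith); linarith
    have h5' : Real.log (4 * t) = Real.log 4 + Real.log t := Real.log_mul (by norm_num) (ne_of_gt htpos)
    have h6 : Real.log 4 = 2 * Real.log 2 := by
      rw [show (4:ℝ) = 2^2 by norm_num, Real.log_pow]; push_cast; ring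
    have hl2 := Real.log_two_lt_d9
    -- log(2 log p) ≤ 2 log 2 + t - 1 ≤ (2/5) t² = (2/5) p ≤ p log(3/2)
    have h7 : Real.log (2 * Real.log p) ≤ t + 39/100 := by
      rw [h5', h6] at h4; linarith
    have h8 : t + 39/100 ≤ (2/5) * p := by nlinarith
    nlinarith

lemma Gcompare (M p : ℝ) (hM : 6 ≤ M) (hp : 5 ≤ p) (hMp : M < p^2) (hc : p ≤ 7 ∨ 11 ≤ p) :
    (p+1) * Real.log (Real.log M) < p * Real.log (Real.log (M*p)) := by
  have hppos : (0:ℝ) < p := by linarith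
  have hMpos : (0:ℝ) < M := by linarith
  have hlM : 1 < Real.log M := by
    rw [Real.lt_log_iff_exp_lt hMpos]
    have := Real.exp_one_lt_d9; linarith
  have hlp : 0 < Real.log p := Real.log_pos (by linarith)
  have h2 : Real.log M < 2 * Real.log p := by
    have := Real.log_lt_log hMpos hMp
    rwa [Real.log_pow, Nat.cast_ofNat] at this
  have hllM : 0 < Real.log (Real.log M) := Real.log_pos hlM
  have hA : Real.log (Real.log M) < Real.log (2 * Real.log p) :=
    Real.log_lt_log (by linarith) h2
  have hB := keylog p hp hc
  have hN : Real.log (M * p) = Real.log M + Real.log p :=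
    Real.log_mul (ne_of_gt hMpos) (ne_of_gt hppos)
  have hN2 : (3/2) * Real.log M < Real.log (M * p) := by rw [hN]; linarith
  have hC : Real.log (3/2) + Real.log (Real.log M) < Real.log (Real.log (M*p)) := by
    have h32 : Real.log ((3/2) * Real.log M) = Real.log (3/2) + Real.log (Real.log M) :=
      Real.log_mul (by norm_num) (by linarith)
    rw [← h32]
    exact Real.log_lt_log (by nlinarith) hN2
  have h1 : Real.log (Real.log M) < p * Real.log (3/2) := lt_of_lt_of_le hA hB
  nlinarith [mul_lt_mul_of_pos_left hC hppos]

lemma sum_div_prime {p : ℕ} (hp : p.Prime) : ∑ d ∈ p.divisors, d = p + 1 := by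
  rw [hp.divisors, Finset.sum_pair hp.one_lt.ne]; omega

lemma main3 (q r p : ℕ) (hq : q.Prime) (hr : r.Prime) (hp : p.Prime)
    (hqr : q < r) (hrp : r < p) : G (q*r*p) < G (q*r) := by
  have hq2 : 2 ≤ q := hq.two_le
  have hr3 : 3 ≤ r := by omega
  have hp4 : 4 ≤ p := by omega
  have hp5 : 5 ≤ p := by
    have h4 : p ≠ 4 := by rintro rfl; exact absurd hp (by norm_num)
    omega
  have hcase : p ≤ 7 ∨ 11 ≤ p := by
    rcases Nat.lt_or_ge p 8 with h | h
    · left; omega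
    · right
      have h8 : p ≠ 8 := by rintro rfl; exact absurd hp (by norm_num)
      have h9 : p ≠ 9 := by rintro rfl; exact absurd hp (by norm_num)
      have h10 : p ≠ 10 := by rintro rfl; exact absurd hp (by norm_num)
      omega
  have hcqr : q.Coprime r := (Nat.coprime_primes hq hr).mpr (by omega)
  have hcqrp : (q*r).Coprime p :=
    Nat.Coprime.mul ((Nat.coprime_primes hq hp).mpr (by omega))
      ((Nat.coprime_primes hr hp).mpr (by omega))
  have S2 : ∑ d ∈ (q*r).divisors, d = (q+1)*(r+1) := by
    rw [hcqr.sum_divisors_mul, sum_div_prime hq, sum_div_prime hr]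
  have S3 : ∑ d ∈ (q*r*p).divisors, d = (q+1)*(r+1)*(p+1) := by
    rw [hcqrp.sum_divisors_mul, S2, sum_div_prime hp]
  -- real versions
  have RS2 : ∑ d ∈ (q*r).divisors, (d:ℝ) = ((q:ℝ)+1)*((r:ℝ)+1) := by
    rw [← Nat.cast_sum, S2]; push_cast; ring
  have RS3 : ∑ d ∈ (q*r*p).divisors, (d:ℝ) = ((q:ℝ)+1)*((r:ℝ)+1)*((p:ℝ)+1) := by
    rw [← Nat.cast_sum, S3]; push_cast; ring
  have hQ : (2:ℝ) ≤ (q:ℝ) := by exact_mod_cast hq2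
  have hR : (3:ℝ) ≤ (r:ℝ) := by exact_mod_cast hr3
  have hP : (5:ℝ) ≤ (p:ℝ) := by exact_mod_cast hp5
  have hQP : (q:ℝ) < (p:ℝ) := by exact_mod_cast (by omega : q < p)
  have hRP : (r:ℝ) < (p:ℝ) := by exact_mod_cast hrp
  have hM6 : (6:ℝ) ≤ (q:ℝ)*(r:ℝ) := by nlinarith
  have hMp2 : (q:ℝ)*(r:ℝ) < (p:ℝ)^2 := by nlinarith
  have hcaseR : (p:ℝ) ≤ 7 ∨ 11 ≤ (p:ℝ) := by
    rcases hcase with h | h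
    · left; exact_mod_cast h
    · right; exact_mod_cast h
  have key := Gcompare ((q:ℝ)*(r:ℝ)) (p:ℝ) hM6 hP hMp2 hcaseR
  have hllM : 0 < Real.log (Real.log ((q:ℝ)*(r:ℝ))) := by
    apply Real.log_pos
    rw [Real.lt_log_iff_exp_lt (by nlinarith)]
    have := Real.exp_one_lt_d9; linarith
  have hllN : 0 < Real.log (Real.log ((q:ℝ)*(r:ℝ)*(p:ℝ))) := by
    apply Real.log_pos
    rw [Real.lt_log_iff_exp_lt (by nlinarith)]
    have := Real.exp_one_lt_d9; nlinarith
  have castN : ((q*r*p : ℕ) : ℝ) = (q:ℝ)*(r:ℝ)*(p:ℝ) := by push_cast; ring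
  have castM : ((q*r : ℕ) : ℝ) = (q:ℝ)*(r:ℝ) := by push_cast; ring
  unfold G
  rw [RS2, RS3, castN, castM]
  have hNpos : (0:ℝ) < (q:ℝ)*(r:ℝ)*(p:ℝ) := by nlinarith
  have hMpos : (0:ℝ) < (q:ℝ)*(r:ℝ) := by nlinarith
  rw [div_lt_div_iff₀ (mul_pos hNpos hllN) (mul_pos hMpos hllM)]
  have hSM : (0:ℝ) < ((q:ℝ)+1)*((r:ℝ)+1) := by positivity
  have H := mul_lt_mul_of_pos_left key (mul_pos hSM hMpos)
  calc ((q:ℝ)+1)*((r:ℝ)+1)*((p:ℝ)+1) * ((q:ℝ)*(r:ℝ) * Real.log (Real.log ((q:ℝ)*(r:ℝ))))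
      = ((q:ℝ)+1)*((r:ℝ)+1)*((q:ℝ)*(r:ℝ)) * (((p:ℝ)+1) * Real.log (Real.log ((q:ℝ)*(r:ℝ)))) := by ring
    _ < ((q:ℝ)+1)*((r:ℝ)+1)*((q:ℝ)*(r:ℝ)) * ((p:ℝ) * Real.log (Real.log ((q:ℝ)*(r:ℝ)*(p:ℝ)))) := H
    _ = ((q:ℝ)+1)*((r:ℝ)+1) * ((q:ℝ)*(r:ℝ)*(p:ℝ) * Real.log (Real.log ((q:ℝ)*(r:ℝ)*(p:ℝ)))) := by ring

lemma exi3 (q r p N : ℕ) (hq : q.Prime) (hr : r.Prime) (hp : p.Prime)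
    (h1 : q < r) (h2 : r < p) (hN : N = q*r*p) :
    ∃ s : ℕ, s.Prime ∧ s ∣ N ∧ G N < G (N/s) := by
  refine ⟨p, hp, by rw [hN]; exact dvd_mul_left p (q*r), ?_⟩
  have hdiv : N / p = q*r := by rw [hN]; exact Nat.mul_div_cancel (q*r) hp.pos
  rw [hdiv, hN]
  exact main3 q r p hq hr hp h1 h2

theorem stmt19 (N : ℕ) (hsq : Squarefree N) (hΩ : (ArithmeticFunction.cardFactors N) = 3) :
    ∃ p : ℕ, p.Prime ∧ p ∣ N ∧ G N < G (N / p) := by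
  have h0 : N ≠ 0 := hsq.ne_zero
  have hlen : N.primeFactorsList.length = 3 := by
    rw [← ArithmeticFunction.cardFactors_apply]; exact hΩ
  have hnd : N.primeFactorsList.Nodup :=
    (Nat.squarefree_iff_nodup_primeFactorsList h0).mp hsq
  have hprod := Nat.prod_primeFactorsList h0
  rcases hl : N.primeFactorsList with _ | ⟨a, _ | ⟨b, _ | ⟨c, l⟩⟩⟩ <;>
    rw [hl] at hlen <;> simp at hlen
  subst hlen
  rw [hl] at hnd hprod
  have ha : a.Prime := Nat.prime_of_mem_primeFactorsList (by rw [hl]; simp)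
  have hb : b.Prime := Nat.prime_of_mem_primeFactorsList (by rw [hl]; simp)
  have hc : c.Prime := Nat.prime_of_mem_primeFactorsList (by rw [hl]; simp)
  have hN : N = a*b*c := by rw [← hprod]; simp [mul_assoc]
  simp only [List.nodup_cons, List.mem_cons, List.mem_singleton] at hnd
  have hab : a ≠ b := fun h => hnd.1 (Or.inl h)
  have hac : a ≠ c := fun h => hnd.1 (Or.inr (by simp [h]))
  have hbc : b ≠ c := by
    have := hnd.2.1
    simp at this
    exact this
  rcases lt_trichotomy a b with h1 | h1 | h1
  · rcases lt_trichotomy b c with h2 | h2 | h2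
    · exact exi3 a b c N ha hb hc h1 h2 hN
    · exact absurd h2 hbc
    · rcases lt_trichotomy a c with h3 | h3 | h3
      · exact exi3 a c b N ha hc hb h3 h2 (by rw [hN]; ring)
      · exact absurd h3 hac
      · exact exi3 c a b N hc ha hb h3 h1 (by rw [hN]; ring)
  · exact absurd h1 hab
  · rcases lt_trichotomy a c with h2 | h2 | h2
    · exact exi3 b a c N hb ha hc h1 h2 (by rw [hN]; ring)
    · exact absurd h2 hac
    · rcases lt_trichotomy b c with h3 | h3 | h3
      · exact exi3 b c a N hb hc ha h3 h2 (by rw [hN]; ring)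
      · exact absurd h3 hbc
      · exact exi3 c b a N hc hb ha h3 h1 (by rw [hN]; ring)
end
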